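/- Let m ≥ 3 and π = γ_{m,m+1} ∈ Π(m+1,m). The set of hereditary (m+1)-stable (m+1)-patterns 𝒫 with 𝒫_π = A¹_{m,m} is exactly {A¹_{m,m+1}, A¹_{m+1,m+1}, A¹_{m-1,m+1} ∪ {(m+1)⃗}} ∪ {D^{m+1}_{1,l} : 3 ≤ l ≤ m+1}. -/
import Mathlib


open Finset

/-- `vec m` is the set `{1, …, m}`. -/
def vec (m : ℕ) : Finset ℕ := Finset.Icc 1 m

/-- `IsNOP s k C` : `C 1, …, C k` form a naturally ordered partition of `{1, …, s}`
into `k` nonempty sets. -/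
def IsNOP (s k : ℕ) (C : ℕ → Finset ℕ) : Prop :=
  (∀ i ∈ Finset.Icc 1 k, (C i).Nonempty) ∧
  (∀ i ∈ Finset.Icc 1 k, ∀ j ∈ Finset.Icc 1 k, i ≠ j → Disjoint (C i) (C j)) ∧
  (Finset.Icc 1 k).biUnion C = Finset.Icc 1 s ∧
  (∀ i ∈ Finset.Icc 1 k, ∀ j ∈ Finset.Icc 1 k, i < j → (C i).min < (C j).min)

/-- The induced subset `P_γ`. -/
def indSet (C : ℕ → Finset ℕ) (k : ℕ) (P : Finset ℕ) : Finset ℕ :=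
  (Finset.Icc 1 k).filter fun j => ((C j) ∩ P).Nonempty

/-- The induced pattern `𝒫_γ`. -/
def indPat (C : ℕ → Finset ℕ) (k : ℕ) (P : Set (Finset ℕ)) : Set (Finset ℕ) :=
  indSet C k '' P

/-- An `m`-pattern: a nonempty collection of nonempty subsets of `{1, …, m}`. -/
def IsPattern (m : ℕ) (P : Set (Finset ℕ)) : Prop :=
  P.Nonempty ∧ ∀ Q ∈ P, Finset.Nonempty Q ∧ Q ⊆ vec m

/-- `k`-stability of an `m`-pattern. -/
def IsStable (m k : ℕ) (P : Set (Finset ℕ)) : Prop :=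
  ∀ k', 2 ≤ k' → k' ≤ k → ∀ α β : ℕ → Finset ℕ,
    IsNOP m k' α → IsNOP m k' β → indPat α k' P = indPat β k' P

/-- `φ_m = {{1},{1,2},…,{1,…,m}}`. -/
def phiPat (m : ℕ) : Set (Finset ℕ) :=
  { S | ∃ l, 1 ≤ l ∧ l ≤ m ∧ S = Finset.Icc 1 l }

/-- `A_{j,m}`: nonempty subsets of `{1,…,m}` of cardinality at most `j`. -/
def APat (j m : ℕ) : Set (Finset ℕ) :=
  { S | S.Nonempty ∧ S ⊆ vec m ∧ S.card ≤ j }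

/-- `A¹_{j,m}`: subsets of `{1,…,m}` of cardinality at most `j` containing `1`. -/
def A1Pat (j m : ℕ) : Set (Finset ℕ) :=
  { S | 1 ∈ S ∧ S ⊆ vec m ∧ S.card ≤ j }

/-- `H^m_{h,l}`: complements in `{1,…,m}` of a set of `h` holes, all lying in `[l,m]`. -/
def HPat (m h l : ℕ) : Set (Finset ℕ) :=
  { S | ∃ D : Finset ℕ, D.card = h ∧ D ⊆ Finset.Icc l m ∧ S = vec m \ D }

/-- `EH^m_{h,l}`: complements in `{1,…,m}` of a set of `h` holes, all in `[l,m]`,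
whose first hole equals `l`. -/
def EHPat (m h l : ℕ) : Set (Finset ℕ) :=
  { S | ∃ D : Finset ℕ, D.card = h ∧ D ⊆ Finset.Icc l m ∧ l ∈ D ∧ S = vec m \ D }

/-- `D^m_{r,s} = A¹_{m-r-1,m} ∪ ⋃_{h=1}^{r} H^m_{h,s-h+1} ∪ {m⃗}`. -/
def DPat (m r s : ℕ) : Set (Finset ℕ) :=
  A1Pat (m - r - 1) m ∪ (⋃ h ∈ Finset.Icc 1 r, HPat m h (s - h + 1)) ∪ {vec m}

/-- `γ_{i,j} ∈ Π(m+1,m)` (for `1 ≤ i < j ≤ m+1`): the naturally ordered partition of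
`{1,…,m+1}` into `m` blocks, namely `{i,j}` together with the singletons of the
remaining points. -/
def gammaIJ (i j : ℕ) : ℕ → Finset ℕ :=
  fun t => if t = i then {i, j} else if t < j then {t} else {t + 1}

/-- A hereditary `m`-stable `m`-pattern. -/
def IsHSP (m : ℕ) (P : Set (Finset ℕ)) : Prop :=
  IsPattern m P ∧ IsStable m m P ∧
  ∀ m', m < m' → ∃ Q : Set (Finset ℕ), IsPattern m' Q ∧ IsStable m' m' Q ∧
    ∀ γ : ℕ → Finset ℕ, IsNOP m' m γ → indPat γ m Q = P

/-- Unique stable lifts. -/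
def HasUSL (m : ℕ) (P : Set (Finset ℕ)) : Prop :=
  ∀ m', m < m' → ∃! Q : Set (Finset ℕ),
    IsPattern m' Q ∧ IsStable m' m' Q ∧
    ∀ γ : ℕ → Finset ℕ, IsNOP m' m γ → indPat γ m Q = P

section Stmt16Aux

open Finset

def iot (i j x : ℕ) : ℕ := if x = j then i else if x < j then x else x - 1
def sig (j u : ℕ) : ℕ := if u < j then u else u + 1
def mimg (i j : ℕ) (P : Set (Finset ℕ)) : Set (Finset ℕ) := (fun S => S.image (iot i j)) '' P

variable {i j n : ℕ}

lemma iot_sig (hij : i < j) (u : ℕ) : iot i j (sig j u) = u := by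
  unfold iot sig; split_ifs <;> omega

lemma sig_iot {x : ℕ} (hij : i < j) (hx : x ≠ i) (hxj : x ≠ j) : sig j (iot i j x) = x := by
  unfold iot sig; split_ifs <;> omega

lemma iot_eq_i_iff (hij : i < j) {x : ℕ} : iot i j x = i ↔ x = i ∨ x = j := by
  unfold iot; split_ifs <;> omega

lemma iot_le (hij : i < j) (hj : j ≤ n) {x : ℕ} (hx : x ≤ n) : iot i j x ≤ n - 1 := by
  unfold iot; split_ifs <;> omega

lemma iot_pos (hi : 1 ≤ i) (hij : i < j) {x : ℕ} (hx : 1 ≤ x) : 1 ≤ iot i j x := by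
  unfold iot; split_ifs <;> omega

lemma sig_le {u : ℕ} (hu : u ≤ n - 1) (hn : 1 ≤ n) : sig j u ≤ n := by
  unfold sig; split_ifs <;> omega

lemma sig_pos {u : ℕ} (hu : 1 ≤ u) : 1 ≤ sig j u := by
  unfold sig; split_ifs <;> omega

lemma sig_ne_j (u : ℕ) : sig j u ≠ j := by
  unfold sig; split_ifs <;> omega

lemma mem_image_iot (hi : 1 ≤ i) (hij : i < j) (S : Finset ℕ) (u : ℕ) :
    u ∈ S.image (iot i j) ↔ (u = i ∧ (i ∈ S ∨ j ∈ S)) ∨ (u ≠ i ∧ sig j u ∈ S) := by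
  simp only [Finset.mem_image]
  constructor
  · rintro ⟨x, hx, rfl⟩
    by_cases hxj : x = j
    · exact Or.inl ⟨by unfold iot; split_ifs <;> omega, Or.inr (hxj ▸ hx)⟩
    · by_cases hxi : x = i
      · exact Or.inl ⟨by unfold iot; split_ifs <;> omega, Or.inl (hxi ▸ hx)⟩
      · refine Or.inr ⟨?_, by rw [sig_iot hij hxi hxj]; exact hx⟩
        intro h; rcases (iot_eq_i_iff hij).1 h with h1 | h1 <;> omega
  · rintro (⟨hui, hS | hS⟩ | ⟨hui, hS⟩)
    · exact ⟨i, hS, by unfold iot; split_ifs <;> omega⟩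
    · exact ⟨j, hS, by unfold iot; split_ifs <;> omega⟩
    · exact ⟨sig j u, hS, iot_sig hij u⟩

lemma indSet_gamma (hi : 1 ≤ i) (hij : i < j) (hj : j ≤ n) {S : Finset ℕ}
    (hS : S ⊆ vec n) : indSet (gammaIJ i j) (n - 1) S = S.image (iot i j) := by
  ext u
  rw [mem_image_iot hi hij]
  simp only [indSet, Finset.mem_filter, Finset.mem_Icc]
  have hSn : ∀ x ∈ S, 1 ≤ x ∧ x ≤ n := by
    intro x hx; have := hS hx; simp only [vec, Finset.mem_Icc] at this; exact this
  constructor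
  · rintro ⟨⟨hu1, hun⟩, x, hx⟩
    rw [Finset.mem_inter] at hx
    obtain ⟨hxb, hxS⟩ := hx
    simp only [gammaIJ] at hxb
    by_cases hui : u = i
    · rw [if_pos hui] at hxb
      simp only [Finset.mem_insert, Finset.mem_singleton] at hxb
      rcases hxb with rfl | rfl
      · exact Or.inl ⟨hui, Or.inl hxS⟩
      · exact Or.inl ⟨hui, Or.inr hxS⟩
    · rw [if_neg hui] at hxb
      refine Or.inr ⟨hui, ?_⟩
      by_cases huj : u < j
      · rw [if_pos huj, Finset.mem_singleton] at hxb
        have hs : sig j u = u := by unfold sig; split_ifs <;> omega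
        rw [hs, ← hxb]; exact hxS
      · rw [if_neg huj, Finset.mem_singleton] at hxb
        have hs : sig j u = u + 1 := by unfold sig; split_ifs <;> omega
        rw [hs, ← hxb]; exact hxS
  · rintro (⟨hui, hmem⟩ | ⟨hui, hmem⟩)
    · refine ⟨⟨by omega, by omega⟩, ?_⟩
      rcases hmem with hmem | hmem
      · exact ⟨i, by simp [gammaIJ, if_pos hui, Finset.mem_inter, hmem]⟩
      · exact ⟨j, by simp [gammaIJ, if_pos hui, Finset.mem_inter, hmem]⟩
    · have hb := hSn _ hmem
      refine ⟨⟨?_, ?_⟩, ⟨sig j u, ?_⟩⟩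
      · unfold sig at hb; split_ifs at hb <;> omega
      · unfold sig at hb; split_ifs at hb <;> omega
      · rw [Finset.mem_inter]
        refine ⟨?_, hmem⟩
        simp only [gammaIJ, if_neg hui]
        by_cases h : u < j <;> simp [sig, h]

lemma indPat_gamma (hi : 1 ≤ i) (hij : i < j) (hj : j ≤ n) {P : Set (Finset ℕ)}
    (hP : ∀ S ∈ P, S ⊆ vec n) : indPat (gammaIJ i j) (n - 1) P = mimg i j P := by
  unfold indPat mimg
  exact Set.image_congr fun S hS => indSet_gamma hi hij hj (hP S hS)

end Stmt16Aux
section Stmt16Aux2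

open Finset

variable {i j n k : ℕ} {C : ℕ → Finset ℕ}

lemma nop_block_subset (h : IsNOP n k C) {t : ℕ} (ht : t ∈ Finset.Icc 1 k) :
    C t ⊆ Finset.Icc 1 n := by
  rw [← h.2.2.1]
  intro x hx
  exact Finset.mem_biUnion.2 ⟨t, ht, hx⟩

lemma nop_mem_range (h : IsNOP n k C) {t x : ℕ} (ht : t ∈ Finset.Icc 1 k) (hx : x ∈ C t) :
    1 ≤ x ∧ x ≤ n := by
  have := nop_block_subset h ht hx
  simpa [Finset.mem_Icc] using this

lemma nop_exists_block (h : IsNOP n k C) {x : ℕ} (hx1 : 1 ≤ x) (hxn : x ≤ n) :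
    ∃ t ∈ Finset.Icc 1 k, x ∈ C t := by
  have : x ∈ Finset.Icc 1 n := by simp [Finset.mem_Icc]; omega
  rw [← h.2.2.1] at this
  exact Finset.mem_biUnion.1 this

lemma nop_one_mem (h : IsNOP n k C) (hn : 1 ≤ n) (hk : 1 ≤ k) : 1 ∈ C 1 := by
  obtain ⟨t, ht, hmem⟩ := nop_exists_block h le_rfl hn
  rcases eq_or_ne t 1 with rfl | hne
  · exact hmem
  · exfalso
    have ht' := Finset.mem_Icc.1 ht
    have h1 : 1 ∈ Finset.Icc 1 k := by simp [Finset.mem_Icc]; omega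
    have hlt := h.2.2.2 1 h1 t ht (by omega)
    have hne1 : (C 1).Nonempty := h.1 1 h1
    have hmin1 : (C 1).min' hne1 ∈ C 1 := Finset.min'_mem _ _
    have hge : 1 ≤ (C 1).min' hne1 := (nop_mem_range h h1 hmin1).1
    have hcoe : ((C 1).min' hne1 : WithTop ℕ) = (C 1).min := Finset.coe_min' hne1
    have hle : (C t).min ≤ ((1:ℕ) : WithTop ℕ) := Finset.min_le hmem
    have : ((C 1).min' hne1 : WithTop ℕ) < ((1:ℕ) : WithTop ℕ) := by
      rw [hcoe]; exact lt_of_lt_of_le hlt hle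
    have : (C 1).min' hne1 < 1 := by exact_mod_cast this
    omega

/-- canonical representative of a block -/
noncomputable def rep (C : ℕ → Finset ℕ) (t : ℕ) : ℕ := sInf (C t : Set ℕ)

lemma rep_mem (h : IsNOP n k C) {t : ℕ} (ht : t ∈ Finset.Icc 1 k) : rep C t ∈ C t := by
  have hne : (C t).Nonempty := h.1 t ht
  have : ((C t : Set ℕ)).Nonempty := by exact_mod_cast hne
  have := Nat.sInf_mem this
  simpa [rep] using this

lemma rep_one (h : IsNOP n k C) (hn : 1 ≤ n) (hk : 1 ≤ k) : rep C 1 = 1 := by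
  have h1 : 1 ∈ C 1 := nop_one_mem h hn hk
  have hle : sInf ((C 1 : Set ℕ)) ≤ 1 := Nat.sInf_le (by exact_mod_cast h1)
  have h1k : (1 : ℕ) ∈ Finset.Icc 1 k := by simp [Finset.mem_Icc]; omega
  have hge : 1 ≤ rep C 1 := (nop_mem_range h h1k (rep_mem h h1k)).1
  simp only [rep] at *
  omega

lemma nop_disjoint_eq (h : IsNOP n k C) {s t x : ℕ} (hs : s ∈ Finset.Icc 1 k)
    (ht : t ∈ Finset.Icc 1 k) (hxs : x ∈ C s) (hxt : x ∈ C t) : s = t := by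
  by_contra hne
  exact (Finset.disjoint_left.1 (h.2.1 s hs t ht hne)) hxs hxt

/-- transversal: image of `rep` over T -/
lemma transversal (h : IsNOP n k C) {T : Finset ℕ} (hT : T ⊆ Finset.Icc 1 k) :
    indSet C k (T.image (rep C)) = T ∧ (T.image (rep C)).card ≤ T.card ∧
      T.image (rep C) ⊆ Finset.Icc 1 n ∧ (1 ∈ T → 1 ∈ T.image (rep C)) := by
  have hn1 : ∀ t ∈ T, rep C t ∈ C t := fun t ht => rep_mem h (hT ht)
  refine ⟨?_, Finset.card_image_le, ?_, ?_⟩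
  · ext u
    simp only [indSet, Finset.mem_filter]
    constructor
    · rintro ⟨hu, x, hx⟩
      rw [Finset.mem_inter, Finset.mem_image] at hx
      obtain ⟨hxu, t, htT, hxt⟩ := hx
      have : u = t := nop_disjoint_eq h hu (hT htT) hxu (hxt ▸ hn1 t htT)
      exact this ▸ htT
    · intro hu
      refine ⟨hT hu, ⟨rep C u, ?_⟩⟩
      rw [Finset.mem_inter]
      exact ⟨hn1 u hu, Finset.mem_image_of_mem _ hu⟩
  · intro x hx
    rw [Finset.mem_image] at hx
    obtain ⟨t, htT, rfl⟩ := hx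
    exact nop_block_subset h (hT htT) (hn1 t htT)
  · intro h1
    rw [Finset.mem_image]
    have hn : 1 ≤ n := by
      have := nop_mem_range h (hT h1) (hn1 1 h1); omega
    have hk : 1 ≤ k := by
      have := Finset.mem_Icc.1 (hT h1); omega
    exact ⟨1, h1, rep_one h hn hk⟩

lemma nop_card_sum (h : IsNOP n k C) : ∑ t ∈ Finset.Icc 1 k, (C t).card = n := by
  have := h.2.2.1
  have hd : (Finset.Icc 1 k : Set ℕ).Pairwise (Function.onFun Disjoint C) := by
    intro s hs t ht hne
    exact h.2.1 s (by exact_mod_cast hs) t (by exact_mod_cast ht) hne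
  calc ∑ t ∈ Finset.Icc 1 k, (C t).card = ((Finset.Icc 1 k).biUnion C).card :=
        (Finset.card_biUnion (fun s hs t ht hne => h.2.1 s hs t ht hne)).symm
    _ = (Finset.Icc 1 n).card := by rw [this]
    _ = n := by rw [Nat.card_Icc]; omega

lemma nop_exists_big_block (h : IsNOP n k C) (hkn : k < n) (hk : 1 ≤ k) :
    ∃ t ∈ Finset.Icc 1 k, 2 ≤ (C t).card := by
  by_contra hc
  push_neg at hc
  have hsum := nop_card_sum h
  have hle : ∑ t ∈ Finset.Icc 1 k, (C t).card ≤ ∑ _t ∈ Finset.Icc 1 k, 1 := by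
    refine Finset.sum_le_sum fun t ht => ?_
    have := hc t ht; omega
  simp [Nat.card_Icc] at hle
  omega

lemma nop_singletons (h : IsNOP n n C) {t : ℕ} (ht : t ∈ Finset.Icc 1 n) : C t = {t} := by
  -- first: all blocks have card 1
  have hcard : ∀ s ∈ Finset.Icc 1 n, (C s).card = 1 := by
    intro s hs
    by_contra hne
    have h1 : 1 ≤ (C s).card := Finset.card_pos.2 (h.1 s hs)
    have h2 : 2 ≤ (C s).card := by omega
    have hsum := nop_card_sum h
    have : ∑ t ∈ Finset.Icc 1 n, (C t).card =
        (C s).card + ∑ t ∈ (Finset.Icc 1 n).erase s, (C t).card :=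
      (Finset.add_sum_erase _ _ hs).symm
    have hge : (n : ℕ) - 1 ≤ ∑ t ∈ (Finset.Icc 1 n).erase s, (C t).card := by
      calc (n : ℕ) - 1 = ((Finset.Icc 1 n).erase s).card := by
            rw [Finset.card_erase_of_mem hs, Nat.card_Icc]; omega
        _ = ∑ _t ∈ (Finset.Icc 1 n).erase s, 1 := by simp
        _ ≤ _ := Finset.sum_le_sum fun t ht =>
            Finset.card_pos.2 (h.1 t (Finset.mem_of_mem_erase ht))
    have hn1 : 1 ≤ n := by have := Finset.mem_Icc.1 hs; omega
    omega
  -- the unique element of block s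
  have hval : ∀ s ∈ Finset.Icc 1 n, ∃ a, C s = {a} := by
    intro s hs; exact Finset.card_eq_one.1 (hcard s hs)
  -- mins are strictly monotone; show C t = {t}
  obtain ⟨a, ha⟩ := hval t ht
  -- helper: value function
  have hmono : ∀ s ∈ Finset.Icc 1 n, ∀ s' ∈ Finset.Icc 1 n, s < s' →
      ∀ b b', C s = {b} → C s' = {b'} → b < b' := by
    intro s hs s' hs' hss b b' hb hb'
    have := h.2.2.2 s hs s' hs' hss
    rw [hb, hb'] at this
    simpa [Finset.min_singleton] using this
  -- define f on Icc 1 n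
  have hrep : ∀ s ∈ Finset.Icc 1 n, C s = {rep C s} := by
    intro s hs
    obtain ⟨b, hb⟩ := hval s hs
    have : rep C s ∈ C s := rep_mem h hs
    rw [hb] at this ⊢
    simp only [Finset.mem_singleton] at this
    rw [this]
  have hat : a = rep C t := by
    have := rep_mem h ht
    rw [ha, Finset.mem_singleton] at this
    exact this.symm
  -- strict mono of rep on Icc 1 n
  have hrmono : ∀ s ∈ Finset.Icc 1 n, ∀ s' ∈ Finset.Icc 1 n, s < s' → rep C s < rep C s' := by
    intro s hs s' hs' hss
    exact hmono s hs s' hs' hss _ _ (hrep s hs) (hrep s' hs')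
  have hinjOn : Set.InjOn (rep C) (Finset.Icc 1 n : Set ℕ) := by
    intro s hs s' hs' he
    by_contra hne
    rcases Nat.lt_or_ge s s' with hlt | hge
    · have := hrmono s (by exact_mod_cast hs) s' (by exact_mod_cast hs') hlt; omega
    · have hlt : s' < s := by omega
      have := hrmono s' (by exact_mod_cast hs') s (by exact_mod_cast hs) hlt; omega
  have htIcc := Finset.mem_Icc.1 ht
  -- lower: t ≤ rep C t
  have hlow : t ≤ rep C t := by
    have hsub : (Finset.Icc 1 t).image (rep C) ⊆ Finset.Icc 1 (rep C t) := by
      intro x hx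
      rw [Finset.mem_image] at hx
      obtain ⟨s, hs, rfl⟩ := hx
      have hsIcc := Finset.mem_Icc.1 hs
      have hs' : s ∈ Finset.Icc 1 n := by simp [Finset.mem_Icc]; omega
      have h1 : 1 ≤ rep C s := (nop_mem_range h hs' (rep_mem h hs')).1
      have h2 : rep C s ≤ rep C t := by
        rcases Nat.lt_or_ge s t with hlt | hge
        · exact le_of_lt (hrmono s hs' t ht hlt)
        · have : s = t := by omega
          rw [this]
      simp [Finset.mem_Icc]; omega
    have hinj2 : Set.InjOn (rep C) (Finset.Icc 1 t : Set ℕ) := by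
      intro s hs s' hs' he
      have hs1 := Finset.mem_Icc.1 (by exact_mod_cast hs : s ∈ Finset.Icc 1 t)
      have hs2 := Finset.mem_Icc.1 (by exact_mod_cast hs' : s' ∈ Finset.Icc 1 t)
      exact hinjOn (by simp [Finset.mem_Icc]; omega) (by simp [Finset.mem_Icc]; omega) he
    have hcard1 : ((Finset.Icc 1 t).image (rep C)).card = t := by
      rw [Finset.card_image_of_injOn hinj2, Nat.card_Icc]
      omega
    have := Finset.card_le_card hsub
    rw [hcard1, Nat.card_Icc] at this
    omega
  -- upper: rep C t ≤ t
  have hup : rep C t ≤ t := by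
    have hsub : (Finset.Icc t n).image (rep C) ⊆ Finset.Icc (rep C t) n := by
      intro x hx
      rw [Finset.mem_image] at hx
      obtain ⟨s, hs, rfl⟩ := hx
      have hsIcc := Finset.mem_Icc.1 hs
      have hs' : s ∈ Finset.Icc 1 n := by simp [Finset.mem_Icc]; omega
      have h2 : rep C s ≤ n := (nop_mem_range h hs' (rep_mem h hs')).2
      have h1 : rep C t ≤ rep C s := by
        rcases Nat.lt_or_ge t s with hlt | hge
        · exact le_of_lt (hrmono t ht s hs' hlt)
        · have : s = t := by omega
          rw [this]
      simp [Finset.mem_Icc]; omega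
    have hinj2 : Set.InjOn (rep C) (Finset.Icc t n : Set ℕ) := by
      intro s hs s' hs' he
      have hs1 := Finset.mem_Icc.1 (by exact_mod_cast hs : s ∈ Finset.Icc t n)
      have hs2 := Finset.mem_Icc.1 (by exact_mod_cast hs' : s' ∈ Finset.Icc t n)
      exact hinjOn (by simp [Finset.mem_Icc]; omega) (by simp [Finset.mem_Icc]; omega) he
    have hcard1 : ((Finset.Icc t n).image (rep C)).card = n - t + 1 := by
      rw [Finset.card_image_of_injOn hinj2, Nat.card_Icc]
      omega
    have := Finset.card_le_card hsub
    rw [hcard1, Nat.card_Icc] at this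
    have hrn : rep C t ≤ n := (nop_mem_range h ht (rep_mem h ht)).2
    omega
  have : a = t := by omega
  rw [ha, this]

lemma indPat_id (h : IsNOP n n C) {P : Set (Finset ℕ)} (hP : ∀ S ∈ P, S ⊆ vec n) :
    indPat C n P = P := by
  have hind : ∀ S ∈ P, indSet C n S = S := by
    intro S hS
    ext t
    simp only [indSet, Finset.mem_filter]
    constructor
    · rintro ⟨ht, x, hx⟩
      rw [nop_singletons h ht, Finset.mem_inter, Finset.mem_singleton] at hx
      exact hx.1 ▸ hx.2
    · intro ht
      have hrange : t ∈ Finset.Icc 1 n := by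
        have := hP S hS ht; simpa [vec] using this
      refine ⟨hrange, ⟨t, ?_⟩⟩
      rw [nop_singletons h hrange, Finset.mem_inter, Finset.mem_singleton]
      exact ⟨rfl, ht⟩
  unfold indPat
  rw [Set.image_congr hind]
  exact Set.image_id' P

end Stmt16Aux2
section Stmt16Aux3

open Finset

variable {i j n k : ℕ} {C : ℕ → Finset ℕ}

lemma mem_gamma {t x : ℕ} : x ∈ gammaIJ i j t ↔
    ((t = i ∧ (x = i ∨ x = j)) ∨ (t ≠ i ∧ t < j ∧ x = t) ∨ (t ≠ i ∧ j ≤ t ∧ x = t + 1)) := by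
  unfold gammaIJ
  split_ifs with h1 h2 <;> simp [Finset.mem_insert, Finset.mem_singleton] <;> omega

lemma gamma_min (hij : i < j) (t : ℕ) :
    (gammaIJ i j t).min = ((if t < j then t else t + 1 : ℕ) : WithTop ℕ) := by
  unfold gammaIJ
  split_ifs with h1 h2
  · rw [h1]
    rw [show ({i, j} : Finset ℕ) = insert i {j} from rfl, Finset.min_insert,
      Finset.min_singleton]
    have : ((i : WithTop ℕ)) ≤ (j : WithTop ℕ) := by exact_mod_cast hij.le
    simp [min_eq_left this]
  · exfalso; omega
  · simp
  · simp

lemma isNOP_gammaIJ (hi : 1 ≤ i) (hij : i < j) (hj : j ≤ n) :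
    IsNOP n (n - 1) (gammaIJ i j) := by
  refine ⟨?_, ?_, ?_, ?_⟩
  · intro t _ht
    unfold gammaIJ
    split_ifs <;> simp
  · intro s hs t ht hne
    rw [Finset.disjoint_left]
    intro x hxs hxt
    rw [mem_gamma] at hxs hxt
    omega
  · ext x
    simp only [Finset.mem_biUnion, Finset.mem_Icc, mem_gamma]
    constructor
    · rintro ⟨t, ht, hc⟩
      omega
    · intro hx
      refine ⟨iot i j x, ?_, ?_⟩
      · constructor
        · exact iot_pos hi hij hx.1
        · exact iot_le hij hj hx.2
      · unfold iot; split_ifs <;> omega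
  · intro s hs t ht hst
    rw [gamma_min hij, gamma_min hij]
    have : (if s < j then s else s + 1) < (if t < j then t else t + 1) := by
      split_ifs <;> omega
    exact_mod_cast this

lemma indSet_subset' (C : ℕ → Finset ℕ) (k : ℕ) (S : Finset ℕ) :
    indSet C k S ⊆ Finset.Icc 1 k := Finset.filter_subset _ _

lemma base_proj (hk2 : 2 ≤ k) (hkn : k ≤ n - 1) (hn : 3 ≤ n) (hC : IsNOP n k C)
    {P : Set (Finset ℕ)}
    (hlow : A1Pat (n - 2) n ⊆ P)
    (hup : ∀ S ∈ P, 1 ∈ S ∧ S ⊆ vec n)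
    (htop : vec n ∈ P ∨ ∀ d, 2 ≤ d → d ≤ n → vec n \ {d} ∈ P) :
    indPat C k P = A1Pat k k := by
  have hn1 : 1 ≤ n := by omega
  have hk1 : 1 ≤ k := by omega
  have h1C1 : 1 ∈ C 1 := nop_one_mem hC hn1 hk1
  ext T
  constructor
  · rintro ⟨S, hS, rfl⟩
    obtain ⟨h1S, hSv⟩ := hup S hS
    refine ⟨?_, ?_, ?_⟩
    · simp only [indSet, Finset.mem_filter]
      refine ⟨by simp [Finset.mem_Icc]; omega, ⟨1, ?_⟩⟩
      rw [Finset.mem_inter]; exact ⟨h1C1, h1S⟩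
    · exact indSet_subset' C k S
    · calc (indSet C k S).card ≤ (Finset.Icc 1 k).card :=
            Finset.card_le_card (indSet_subset' C k S)
        _ = k := by rw [Nat.card_Icc]; omega
  · rintro ⟨h1T, hTv, hTc⟩
    have hTk : T ⊆ Finset.Icc 1 k := hTv
    by_cases hsmall : T.card ≤ n - 2
    · obtain ⟨hind, hcard, hsub, hone⟩ := transversal hC hTk
      refine ⟨T.image (rep C), hlow ⟨hone h1T, hsub, by omega⟩, hind⟩
    · -- T = Icc 1 k and k = n - 1
      have hTcard : T.card = k := by
        have : (Finset.Icc 1 k).card = k := by rw [Nat.card_Icc]; omega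
        have hle := Finset.card_le_card hTk
        omega
      have hTeq : T = Finset.Icc 1 k := by
        refine Finset.eq_of_subset_of_card_le hTk ?_
        rw [Nat.card_Icc]; omega
      rcases htop with hfull | hcos
      · refine ⟨vec n, hfull, ?_⟩
        rw [hTeq]
        apply Finset.filter_true_of_mem
        intro u hu
        obtain ⟨x, hx⟩ := hC.1 u hu
        exact ⟨x, Finset.mem_inter.2 ⟨hx, nop_block_subset hC hu hx⟩⟩
      · have hkln : k < n := by omega
        obtain ⟨t0, ht0, hbig⟩ := nop_exists_big_block hC hkln hk1
        have hne0 : (C t0).Nonempty := hC.1 t0 ht0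
        set d := (C t0).max' hne0 with hd
        have hmlt : (C t0).min' hne0 < d := Finset.min'_lt_max'_of_card _ (by omega)
        have hmin1 : 1 ≤ (C t0).min' hne0 := (nop_mem_range hC ht0 (Finset.min'_mem _ _)).1
        have hdn : d ≤ n := (nop_mem_range hC ht0 (Finset.max'_mem _ _)).2
        have hd2 : 2 ≤ d := by omega
        refine ⟨vec n \ {d}, hcos d hd2 hdn, ?_⟩
        rw [hTeq]
        apply Finset.filter_true_of_mem
        intro u hu
        by_cases hut : u = t0
        · refine ⟨(C t0).min' hne0, Finset.mem_inter.2 ⟨hut ▸ Finset.min'_mem _ _, ?_⟩⟩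
          rw [Finset.mem_sdiff, Finset.mem_singleton]
          have := nop_mem_range hC ht0 (Finset.min'_mem _ hne0)
          constructor
          · simp only [vec, Finset.mem_Icc]; omega
          · omega
        · obtain ⟨x, hx⟩ := hC.1 u hu
          refine ⟨x, Finset.mem_inter.2 ⟨hx, ?_⟩⟩
          rw [Finset.mem_sdiff, Finset.mem_singleton]
          have hxr := nop_mem_range hC hu hx
          constructor
          · simp only [vec, Finset.mem_Icc]; omega
          · intro hxd
            exact hut (nop_disjoint_eq hC hu ht0 hx (by rw [hxd]; exact Finset.max'_mem _ _))
  -- end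
end Stmt16Aux3
section Stmt16Aux4

open Finset

variable {i j n k : ℕ} {α : ℕ → Finset ℕ}

lemma iot_ge_i (hij : i < j) {x : ℕ} (hx : i ≤ x) : i ≤ iot i j x := by
  unfold iot; split_ifs <;> omega

lemma iot_mono (hij : i < j) {a x : ℕ} (hax : a ≤ x) (ha : a ≠ j) (hx : x ≠ j) :
    iot i j a ≤ iot i j x := by
  unfold iot; split_ifs <;> omega

lemma iot_strict (hij : i < j) {a a' : ℕ} (h : a < a') (ha : a ≠ j) (ha' : a' ≠ j) :
    iot i j a < iot i j a' := by
  unfold iot; split_ifs <;> omega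

lemma iot_gt_i (hij : i < j) {a' : ℕ} (h : i < a') (ha' : a' ≠ j) : i < iot i j a' := by
  unfold iot; split_ifs <;> omega

lemma iot_lt_i (hij : i < j) {a : ℕ} (h : a < i) : iot i j a = a := by
  unfold iot; split_ifs <;> omega

lemma iot_i (hij : i < j) : iot i j i = i := by
  unfold iot; split_ifs <;> omega

lemma factor (hk2 : 2 ≤ k) (hkn : k < n) (hα : IsNOP n k α) :
    ∃ i j β, 1 ≤ i ∧ i < j ∧ j ≤ n ∧ IsNOP (n - 1) k β ∧
      ∀ P : Set (Finset ℕ), (∀ S ∈ P, S ⊆ vec n) →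
        indPat α k P = indPat β k (mimg i j P) := by
  have hk1 : 1 ≤ k := by omega
  obtain ⟨t0, ht0, hbig⟩ := nop_exists_big_block hα hkn hk1
  have hne0 : (α t0).Nonempty := hα.1 t0 ht0
  set i := (α t0).min' hne0 with hidef
  set j := (α t0).max' hne0 with hjdef
  have hij : i < j := Finset.min'_lt_max'_of_card _ (by omega)
  have hiα : i ∈ α t0 := Finset.min'_mem _ _
  have hjα : j ∈ α t0 := Finset.max'_mem _ _
  have hi : 1 ≤ i := (nop_mem_range hα ht0 hiα).1
  have hj : j ≤ n := (nop_mem_range hα ht0 hjα).2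
  -- blocks other than t0 avoid i and j
  have havoid : ∀ s ∈ Finset.Icc 1 k, s ≠ t0 → i ∉ α s ∧ j ∉ α s := by
    intro s hs hst
    constructor <;> intro hmem
    · exact hst (nop_disjoint_eq hα hs ht0 hmem hiα)
    · exact hst (nop_disjoint_eq hα hs ht0 hmem hjα)
  refine ⟨i, j, fun s => (α s).image (iot i j), hi, hij, hj, ⟨?_, ?_, ?_, ?_⟩, ?_⟩
  · intro s hs
    exact (hα.1 s hs).image _
  · intro s hs s' hs' hne
    rw [Finset.disjoint_left]
    intro u hu hu'
    rw [mem_image_iot hi hij] at hu hu'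
    rcases hu with ⟨hui, hm⟩ | ⟨hui, hm⟩
    · rcases hu' with ⟨_, hm'⟩ | ⟨hui', _⟩
      · have hst : s = t0 := by
          rcases hm with hm | hm
          · exact nop_disjoint_eq hα hs ht0 hm hiα
          · exact nop_disjoint_eq hα hs ht0 hm hjα
        have hst' : s' = t0 := by
          rcases hm' with hm' | hm'
          · exact nop_disjoint_eq hα hs' ht0 hm' hiα
          · exact nop_disjoint_eq hα hs' ht0 hm' hjα
        exact hne (hst.trans hst'.symm)
      · exact hui' hui
    · rcases hu' with ⟨hui', _⟩ | ⟨_, hm'⟩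
      · exact hui hui'
      · exact hne (nop_disjoint_eq hα hs hs' hm hm')
  · ext u
    simp only [Finset.mem_biUnion, Finset.mem_Icc]
    constructor
    · rintro ⟨s, hs, hu⟩
      rw [mem_image_iot hi hij] at hu
      rcases hu with ⟨rfl, _⟩ | ⟨hui, hm⟩
      · omega
      · have := nop_mem_range hα (by simp [Finset.mem_Icc]; omega) hm
        unfold sig at this; split_ifs at this <;> omega
    · intro hu
      have hs1 : 1 ≤ sig j u := sig_pos (by omega)
      have hs2 : sig j u ≤ n := sig_le (by omega) (by omega)
      obtain ⟨s, hs, hms⟩ := nop_exists_block hα hs1 hs2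
      refine ⟨s, by simpa [Finset.mem_Icc] using hs, ?_⟩
      rw [mem_image_iot hi hij]
      by_cases hui : u = i
      · have : sig j u = i := by unfold sig; split_ifs <;> omega
        rw [this] at hms
        exact Or.inl ⟨hui, Or.inl hms⟩
      · exact Or.inr ⟨hui, hms⟩
  · intro s hs s' hs' hss
    have hnes : (α s).Nonempty := hα.1 s hs
    have hnes' : (α s').Nonempty := hα.1 s' hs'
    set a := (α s).min' hnes with hadef
    set a' := (α s').min' hnes' with ha'def
    have haa' : a < a' := by
      have := hα.2.2.2 s hs s' hs' hss
      rw [← Finset.coe_min' hnes, ← Finset.coe_min' hnes'] at this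
      exact_mod_cast this
    -- min of image = iot of min
    have hmin : ∀ s'' (hs'' : s'' ∈ Finset.Icc 1 k) (hne : (α s'').Nonempty),
        ((α s'').image (iot i j)).min' (hne.image _) = iot i j ((α s'').min' hne) := by
      intro s'' hs'' hne
      apply le_antisymm
      · exact Finset.min'_le _ _ (Finset.mem_image_of_mem _ (Finset.min'_mem _ _))
      · apply Finset.le_min'
        intro u hu
        rw [Finset.mem_image] at hu
        obtain ⟨x, hx, rfl⟩ := hu
        have hax : (α s'').min' hne ≤ x := Finset.min'_le _ _ hx
        by_cases hst : s'' = t0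
        · have hia : i ≤ (α s'').min' hne := by
            apply Finset.le_min'
            intro y hy
            rw [hst] at hy
            exact Finset.min'_le _ _ hy
          have hia2 : (α s'').min' hne ≤ i := Finset.min'_le _ _ (by rw [hst]; exact hiα)
          have : (α s'').min' hne = i := le_antisymm hia2 hia
          rw [this, iot_i hij]
          exact iot_ge_i hij (by omega)
        · have hav := havoid s'' hs'' hst
          have hminmem := Finset.min'_mem _ hne
          apply iot_mono hij hax
          · intro hcon; exact hav.2 (hcon ▸ hminmem)
          · intro hcon; exact hav.2 (hcon ▸ hx)
    have h1 := hmin s hs hnes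
    have h2 := hmin s' hs' hnes'
    rw [← Finset.coe_min' (hnes.image (iot i j)), ← Finset.coe_min' (hnes'.image (iot i j))]
    rw [h1, h2]
    have goal : iot i j a < iot i j a' := by
      by_cases hst : s = t0
      · have hai : a = i := by
          apply le_antisymm (Finset.min'_le _ _ (by rw [hst]; exact hiα))
          apply Finset.le_min'
          intro y hy
          rw [hst] at hy
          exact Finset.min'_le _ _ hy
        have hst' : s' ≠ t0 := by intro h; rw [h] at hss; omega
        have hav := havoid s' hs' hst'
        have ha'j : a' ≠ j := by
          intro hcon; exact hav.2 (hcon ▸ Finset.min'_mem _ hnes')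
        rw [hai, iot_i hij]
        exact iot_gt_i hij (hai ▸ haa') ha'j
      · by_cases hst' : s' = t0
        · have hai' : a' = i := by
            apply le_antisymm (Finset.min'_le _ _ (by rw [hst']; exact hiα))
            apply Finset.le_min'
            intro y hy
            rw [hst'] at hy
            exact Finset.min'_le _ _ hy
          have hav := havoid s hs hst
          have hlt : a < i := hai' ▸ haa'
          rw [iot_lt_i hij hlt, hai', iot_i hij]
          exact hlt
        · have hav := havoid s hs hst
          have hav' := havoid s' hs' hst'
          apply iot_strict hij haa'
          · intro hcon; exact hav.2 (hcon ▸ Finset.min'_mem _ hnes)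
          · intro hcon; exact hav'.2 (hcon ▸ Finset.min'_mem _ hnes')
    exact_mod_cast goal
  · intro P hP
    unfold indPat mimg
    rw [Set.image_image]
    apply Set.image_congr
    intro S hS
    have hSv : S ⊆ vec n := hP S hS
    ext s
    simp only [indSet, Finset.mem_filter]
    constructor
    · rintro ⟨hs, x, hx⟩
      rw [Finset.mem_inter] at hx
      refine ⟨hs, ⟨iot i j x, Finset.mem_inter.2 ⟨?_, ?_⟩⟩⟩
      · exact Finset.mem_image_of_mem _ hx.1
      · exact Finset.mem_image_of_mem _ hx.2
    · rintro ⟨hs, u, hu⟩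
      rw [Finset.mem_inter, mem_image_iot hi hij, mem_image_iot hi hij] at hu
      obtain ⟨hu1, hu2⟩ := hu
      refine ⟨hs, ?_⟩
      rcases hu1 with ⟨hui, hm⟩ | ⟨hui, hm⟩
      · have hst : s = t0 := by
          rcases hm with hm | hm
          · exact nop_disjoint_eq hα hs ht0 hm hiα
          · exact nop_disjoint_eq hα hs ht0 hm hjα
        rcases hu2 with ⟨_, hmS⟩ | ⟨hui', _⟩
        · rcases hmS with hmS | hmS
          · exact ⟨i, Finset.mem_inter.2 ⟨by rw [hst]; exact hiα, hmS⟩⟩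
          · exact ⟨j, Finset.mem_inter.2 ⟨by rw [hst]; exact hjα, hmS⟩⟩
        · exact absurd hui hui'
      · rcases hu2 with ⟨hui', _⟩ | ⟨_, hmS⟩
        · exact absurd hui' hui
        · exact ⟨sig j u, Finset.mem_inter.2 ⟨hm, hmS⟩⟩

lemma master (b : ℕ) (hb : 3 ≤ b) (Fam : ℕ → Set (Finset ℕ))
    (hPat : ∀ n, b ≤ n → IsPattern n (Fam n))
    (hMerge : ∀ n i j, b < n → 1 ≤ i → i < j → j ≤ n → mimg i j (Fam n) = Fam (n - 1))
    (hBase : ∀ k C, 2 ≤ k → k < b → IsNOP b k C → indPat C k (Fam b) = A1Pat k k) :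
    ∀ n, b ≤ n →
      (∀ k C, b ≤ k → k ≤ n → IsNOP n k C → indPat C k (Fam n) = Fam k) ∧
      (∀ k C, 2 ≤ k → k < b → IsNOP n k C → indPat C k (Fam n) = A1Pat k k) := by
  intro n hn
  induction n, hn using Nat.le_induction with
  | base =>
    constructor
    · intro k C hbk hkb hC
      have hkbeq : k = b := by omega
      rw [hkbeq] at hC ⊢
      exact indPat_id hC (fun S hS => ((hPat b le_rfl).2 S hS).2)
    · intro k C h2 hkb hC
      exact hBase k C h2 hkb hC
  | succ n hn ih =>
    have hPn1 : ∀ S ∈ Fam (n + 1), S ⊆ vec (n + 1) :=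
      fun S hS => ((hPat (n + 1) (by omega)).2 S hS).2
    constructor
    · intro k C hbk hkn hC
      rcases eq_or_lt_of_le hkn with rfl | hlt
      · exact indPat_id hC hPn1
      · obtain ⟨i, j, β, hi, hij, hj, hβ, hcomp⟩ := factor (by omega) hlt hC
        rw [hcomp (Fam (n + 1)) hPn1]
        rw [hMerge (n + 1) i j (by omega) hi hij hj]
        simp only [Nat.add_sub_cancel] at hβ ⊢
        exact ih.1 k β hbk (by omega) hβ
    · intro k C h2 hkb hC
      obtain ⟨i, j, β, hi, hij, hj, hβ, hcomp⟩ := factor (by omega) (by omega) hC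
      rw [hcomp (Fam (n + 1)) hPn1]
      rw [hMerge (n + 1) i j (by omega) hi hij hj]
      simp only [Nat.add_sub_cancel] at hβ ⊢
      exact ih.2 k β h2 hkb hβ

lemma master_stable (b : ℕ) (hb : 3 ≤ b) (Fam : ℕ → Set (Finset ℕ))
    (hPat : ∀ n, b ≤ n → IsPattern n (Fam n))
    (hMerge : ∀ n i j, b < n → 1 ≤ i → i < j → j ≤ n → mimg i j (Fam n) = Fam (n - 1))
    (hBase : ∀ k C, 2 ≤ k → k < b → IsNOP b k C → indPat C k (Fam b) = A1Pat k k) :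
    ∀ n, b ≤ n → IsStable n n (Fam n) := by
  intro n hn k' h2 hk' α β hα hβ
  have H := master b hb Fam hPat hMerge hBase n hn
  rcases lt_or_ge k' b with hlt | hge
  · rw [H.2 k' α h2 hlt hα, H.2 k' β h2 hlt hβ]
  · rw [H.1 k' α hge hk' hα, H.1 k' β hge hk' hβ]

lemma master_HSP (b : ℕ) (hb : 3 ≤ b) (Fam : ℕ → Set (Finset ℕ))
    (hPat : ∀ n, b ≤ n → IsPattern n (Fam n))
    (hMerge : ∀ n i j, b < n → 1 ≤ i → i < j → j ≤ n → mimg i j (Fam n) = Fam (n - 1))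
    (hBase : ∀ k C, 2 ≤ k → k < b → IsNOP b k C → indPat C k (Fam b) = A1Pat k k) :
    IsHSP b (Fam b) := by
  refine ⟨hPat b le_rfl, master_stable b hb Fam hPat hMerge hBase b le_rfl, ?_⟩
  intro m' hm'
  refine ⟨Fam m', hPat m' (by omega), master_stable b hb Fam hPat hMerge hBase m' (by omega), ?_⟩
  intro γ hγ
  exact (master b hb Fam hPat hMerge hBase m' (by omega)).1 b γ le_rfl (by omega) hγ

end Stmt16Aux4
section Stmt16Aux5

open Finset

variable {i j n q : ℕ}

lemma sig_injective (j : ℕ) : Function.Injective (sig j) := by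
  intro a b; unfold sig; split_ifs <;> omega

lemma image_sig_image_iot (hij : i < j) (T : Finset ℕ) :
    (T.image (sig j)).image (iot i j) = T := by
  rw [Finset.image_image]
  have : ∀ x ∈ T, (iot i j ∘ sig j) x = id x := by
    intro x _; simp only [Function.comp_apply, id_eq]; exact iot_sig hij x
  rw [Finset.image_congr this, Finset.image_id]

lemma one_mem_image_iot (hi : 1 ≤ i) (hij : i < j) {S : Finset ℕ} (h1 : 1 ∈ S) :
    1 ∈ S.image (iot i j) := by
  rw [mem_image_iot hi hij]
  by_cases h : 1 = i
  · exact Or.inl ⟨h, Or.inl (h ▸ h1)⟩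
  · refine Or.inr ⟨h, ?_⟩
    have : sig j 1 = 1 := by unfold sig; split_ifs <;> omega
    rw [this]; exact h1

lemma image_iot_subset_vec (hi : 1 ≤ i) (hij : i < j) (hj : j ≤ n) {S : Finset ℕ}
    (hS : S ⊆ vec n) : S.image (iot i j) ⊆ vec (n - 1) := by
  intro u hu
  rw [Finset.mem_image] at hu
  obtain ⟨x, hx, rfl⟩ := hu
  have := hS hx
  simp only [vec, Finset.mem_Icc] at this ⊢
  exact ⟨iot_pos hi hij this.1, iot_le hij hj this.2⟩

lemma image_sig_subset_vec (hij : i < j) (hj : j ≤ n) {T : Finset ℕ}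
    (hT : T ⊆ vec (n - 1)) (hn : 1 ≤ n) : T.image (sig j) ⊆ vec n := by
  intro x hx
  rw [Finset.mem_image] at hx
  obtain ⟨u, hu, rfl⟩ := hx
  have := hT hu
  simp only [vec, Finset.mem_Icc] at this ⊢
  exact ⟨sig_pos this.1, sig_le this.2 hn⟩

lemma one_mem_image_sig (hij : i < j) {T : Finset ℕ} (h1 : 1 ∈ T) (hj2 : 2 ≤ j) :
    1 ∈ T.image (sig j) := by
  rw [Finset.mem_image]
  exact ⟨1, h1, by unfold sig; split_ifs <;> omega⟩

lemma mimg_A1min (hi : 1 ≤ i) (hij : i < j) (hj : j ≤ n) :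
    mimg i j (A1Pat q n) = A1Pat (min q (n - 1)) (n - 1) := by
  ext T
  constructor
  · rintro ⟨S, ⟨h1S, hSv, hSc⟩, rfl⟩
    refine ⟨one_mem_image_iot hi hij h1S, image_iot_subset_vec hi hij hj hSv, ?_⟩
    refine le_min (le_trans Finset.card_image_le hSc) ?_
    calc (S.image (iot i j)).card ≤ (vec (n - 1)).card :=
          Finset.card_le_card (image_iot_subset_vec hi hij hj hSv)
      _ = n - 1 := by rw [vec, Nat.card_Icc]; omega
  · rintro ⟨h1T, hTv, hTc⟩
    refine ⟨T.image (sig j), ⟨?_, ?_, ?_⟩, image_sig_image_iot hij T⟩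
    · exact one_mem_image_sig hij h1T (by omega)
    · exact image_sig_subset_vec hij hj hTv (by omega)
    · exact le_trans Finset.card_image_le (le_trans hTc (min_le_left _ _))

lemma mimg_A1 (hi : 1 ≤ i) (hij : i < j) (hj : j ≤ n) (hq : q ≤ n - 1) :
    mimg i j (A1Pat q n) = A1Pat q (n - 1) := by
  rw [mimg_A1min hi hij hj, min_eq_left hq]

lemma mimg_union (i j : ℕ) (P Q : Set (Finset ℕ)) :
    mimg i j (P ∪ Q) = mimg i j P ∪ mimg i j Q := Set.image_union _ _ _

lemma image_iot_vec (hi : 1 ≤ i) (hij : i < j) (hj : j ≤ n) :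
    (vec n).image (iot i j) = vec (n - 1) := by
  ext u
  rw [mem_image_iot hi hij]
  simp only [vec, Finset.mem_Icc]
  constructor
  · rintro (⟨rfl, _⟩ | ⟨hui, hm⟩)
    · omega
    · unfold sig at hm; split_ifs at hm <;> omega
  · intro hu
    by_cases hui : u = i
    · exact Or.inl ⟨hui, Or.inl ⟨hi, by omega⟩⟩
    · refine Or.inr ⟨hui, ?_⟩
      unfold sig; split_ifs <;> omega

lemma mimg_singleton_vec (hi : 1 ≤ i) (hij : i < j) (hj : j ≤ n) :
    mimg i j ({vec n} : Set (Finset ℕ)) = {vec (n - 1)} := by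
  unfold mimg
  rw [Set.image_singleton, image_iot_vec hi hij hj]

-- membership characterization used repeatedly
lemma mem_image_iot_i (hi : 1 ≤ i) (hij : i < j) {S : Finset ℕ} :
    i ∈ S.image (iot i j) ↔ (i ∈ S ∨ j ∈ S) := by
  rw [mem_image_iot hi hij]
  constructor
  · rintro (⟨_, h⟩ | ⟨hne, _⟩)
    · exact h
    · exact absurd rfl hne
  · intro h; exact Or.inl ⟨rfl, h⟩

lemma mem_image_iot_ne (hi : 1 ≤ i) (hij : i < j) {S : Finset ℕ} {u : ℕ} (hu : u ≠ i) :
    u ∈ S.image (iot i j) ↔ sig j u ∈ S := by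
  rw [mem_image_iot hi hij]
  constructor
  · rintro (⟨h, _⟩ | ⟨_, h⟩)
    · exact absurd h hu
    · exact h
  · intro h; exact Or.inr ⟨hu, h⟩

lemma sig_mem_vec (hij : i < j) (hj : j ≤ n) {u : ℕ} :
    sig j u ∈ vec n ↔ u ∈ vec (n - 1) := by
  simp only [vec, Finset.mem_Icc]
  unfold sig; split_ifs <;> omega

-- G11 variants
lemma image_sdiff_iff (hi : 1 ≤ i) (hij : i < j) (hj : j ≤ n) {D : Finset ℕ}
    (hD : i ∈ D ↔ j ∈ D) :
    (vec n \ D).image (iot i j) = vec (n - 1) \ D.image (iot i j) := by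
  ext u
  by_cases hui : u = i
  · subst hui
    simp only [mem_image_iot_i hi hij, Finset.mem_sdiff, vec, Finset.mem_Icc]
    constructor
    · rintro (⟨_, h⟩ | ⟨_, h⟩) <;> exact ⟨⟨hi, by omega⟩, by tauto⟩
    · rintro ⟨_, h⟩
      left
      exact ⟨⟨hi, by omega⟩, by tauto⟩
  · rw [mem_image_iot_ne hi hij hui, Finset.mem_sdiff, Finset.mem_sdiff,
      mem_image_iot_ne hi hij hui, sig_mem_vec hij hj]

lemma image_sdiff_one (hi : 1 ≤ i) (hij : i < j) (hj : j ≤ n) {D : Finset ℕ}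
    (hD : (i ∈ D ∧ j ∉ D) ∨ (i ∉ D ∧ j ∈ D)) :
    (vec n \ D).image (iot i j) = vec (n - 1) \ (D.image (iot i j)).erase i := by
  ext u
  by_cases hui : u = i
  · subst hui
    simp only [mem_image_iot_i hi hij, Finset.mem_sdiff, Finset.mem_erase, vec, Finset.mem_Icc]
    constructor
    · rintro (⟨h, _⟩ | ⟨h, _⟩) <;> exact ⟨⟨hi, by omega⟩, by tauto⟩
    · intro _
      rcases hD with ⟨_, h⟩ | ⟨h, _⟩
      · right; exact ⟨⟨by omega, by omega⟩, h⟩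
      · left; exact ⟨⟨hi, by omega⟩, h⟩
  · rw [mem_image_iot_ne hi hij hui, Finset.mem_sdiff, Finset.mem_sdiff, Finset.mem_erase,
      sig_mem_vec hij hj, mem_image_iot_ne hi hij hui]
    tauto

lemma image_iot_injOn (hi : 1 ≤ i) (hij : i < j) {D : Finset ℕ} (hjD : j ∉ D) :
    Set.InjOn (iot i j) (D : Set ℕ) := by
  intro x hx y hy hxy
  by_cases hxi : iot i j x = i
  · have hyi : iot i j y = i := by rw [← hxy]; exact hxi
    rcases (iot_eq_i_iff hij).1 hxi with h | h
    · rcases (iot_eq_i_iff hij).1 hyi with h' | h'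
      · omega
      · exact absurd (h' ▸ hy) (by exact_mod_cast hjD)
    · exact absurd (h ▸ hx) (by exact_mod_cast hjD)
  · have hyi : iot i j y ≠ i := by rw [← hxy]; exact hxi
    have hxj : x ≠ j := fun h => by
      exact absurd (h ▸ hx) (by exact_mod_cast hjD)
    have hyj : y ≠ j := fun h => by
      exact absurd (h ▸ hy) (by exact_mod_cast hjD)
    have hxi' : x ≠ i := fun h => hxi (by rw [h]; exact iot_i hij)
    have hyi' : y ≠ i := fun h => hyi (by rw [h]; exact iot_i hij)
    calc x = sig j (iot i j x) := (sig_iot hij hxi' hxj).symm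
      _ = sig j (iot i j y) := by rw [hxy]
      _ = y := sig_iot hij hyi' hyj

end Stmt16Aux5
section Stmt16Aux6

open Finset

variable {i j n : ℕ}

lemma mem_DPat (N R So : ℕ) (T : Finset ℕ) :
    T ∈ DPat N R So ↔ (T ∈ A1Pat (N - R - 1) N ∨
      (∃ h, (1 ≤ h ∧ h ≤ R) ∧ T ∈ HPat N h (So - h + 1)) ∨ T = vec N) := by
  simp only [DPat, Set.mem_union, Set.mem_iUnion, Set.mem_singleton_iff, Finset.mem_Icc,
    exists_prop]
  rw [or_assoc]

lemma sig_eq_i_imp (hij : i < j) {u : ℕ} (h : sig j u = i) : u = i := by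
  unfold sig at h; split_ifs at h <;> omega

lemma iot_j (hij : i < j) : iot i j j = i := by
  unfold iot; split_ifs <;> omega

lemma mimg_DPat (hi : 1 ≤ i) (hij : i < j) (hj : j ≤ n) {r s : ℕ}
    (hr : 2 ≤ r) (hrs : r + 2 ≤ s) (hrn : r + 3 ≤ n) (hsn : s ≤ n) :
    mimg i j (DPat n r s) = DPat (n - 1) (r - 1) (s - 1) := by
  have harith1 : n - 1 - (r - 1) - 1 = n - r - 1 := by omega
  ext T
  rw [mem_DPat]
  constructor
  · rintro ⟨S, hS, rfl⟩
    dsimp only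
    rw [mem_DPat] at hS
    rcases hS with hS | ⟨h, ⟨hh1, hhr⟩, D, hDc, hDsub, rfl⟩ | rfl
    · -- small part
      obtain ⟨h1S, hSv, hSc⟩ := hS
      rw [harith1]
      exact Or.inl ⟨one_mem_image_iot hi hij h1S, image_iot_subset_vec hi hij hj hSv,
        le_trans Finset.card_image_le hSc⟩
    · -- H part
      have hb : ∀ d ∈ D, s - h + 1 ≤ d ∧ d ≤ n := by
        intro d hd; have := hDsub hd; rw [Finset.mem_Icc] at this; omega
      have hsh : s - h + 1 = s - h + 1 := rfl
      by_cases hiD : i ∈ D <;> by_cases hjD : j ∈ D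
      · -- both in D
        have h2 : 2 ≤ h := by
          have hsub2 : ({i, j} : Finset ℕ) ⊆ D := by
            intro x hx
            simp only [Finset.mem_insert, Finset.mem_singleton] at hx
            rcases hx with rfl | rfl <;> assumption
          have hc2 : ({i, j} : Finset ℕ).card = 2 := by
            rw [Finset.card_insert_of_notMem (by simp; omega), Finset.card_singleton]
          have := Finset.card_le_card hsub2
          omega
        have hEe : D.image (iot i j) = (D.erase j).image (iot i j) := by
          apply Finset.Subset.antisymm
          · intro u hu
            rw [Finset.mem_image] at hu ⊢
            obtain ⟨d, hd, rfl⟩ := hu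
            by_cases hdj : d = j
            · refine ⟨i, Finset.mem_erase.2 ⟨by omega, hiD⟩, ?_⟩
              rw [hdj, iot_j hij, iot_i hij]
            · exact ⟨d, Finset.mem_erase.2 ⟨hdj, hd⟩, rfl⟩
          · intro u hu
            rw [Finset.mem_image] at hu ⊢
            obtain ⟨d, hd, rfl⟩ := hu
            exact ⟨d, Finset.mem_of_mem_erase hd, rfl⟩
        have himg := image_sdiff_iff hi hij hj (show i ∈ D ↔ j ∈ D by tauto)
        rw [himg, hEe]
        refine Or.inr (Or.inl ⟨h - 1, ⟨by omega, by omega⟩, (D.erase j).image (iot i j), ?_, ?_, rfl⟩)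
        · rw [Finset.card_image_of_injOn (image_iot_injOn hi hij (Finset.notMem_erase _ _)),
            Finset.card_erase_of_mem hjD, hDc]
        · intro u hu
          rw [Finset.mem_image] at hu
          obtain ⟨d, hd, rfl⟩ := hu
          rw [Finset.mem_erase] at hd
          obtain ⟨hdj, hdD⟩ := hd
          have hbd := hb d hdD
          have hbi := hb i hiD
          rw [Finset.mem_Icc]
          unfold iot; split_ifs <;> omega
      · -- i in D, j not in D
        have hEe : (D.image (iot i j)).erase i = (D.erase i).image (iot i j) := by
          ext u
          simp only [Finset.mem_erase, Finset.mem_image]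
          constructor
          · rintro ⟨hui, d, hd, rfl⟩
            refine ⟨d, ⟨?_, hd⟩, rfl⟩
            intro hdi; exact hui (by rw [hdi]; exact iot_i hij)
          · rintro ⟨d, ⟨hdi, hd⟩, rfl⟩
            refine ⟨?_, d, hd, rfl⟩
            intro hcon
            rcases (iot_eq_i_iff hij).1 hcon with h' | h'
            · exact hdi h'
            · exact hjD (h' ▸ hd)
        have himg := image_sdiff_one hi hij hj (Or.inl ⟨hiD, hjD⟩)
        rw [himg, hEe]
        by_cases h1 : h = 1
        · have hDi : D = {i} := by
            obtain ⟨a, ha⟩ := Finset.card_eq_one.1 (h1 ▸ hDc)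
            rw [ha] at hiD
            rw [Finset.mem_singleton] at hiD
            rw [ha, hiD]
          rw [hDi, Finset.erase_singleton, Finset.image_empty, Finset.sdiff_empty]
          exact Or.inr (Or.inr rfl)
        · refine Or.inr (Or.inl ⟨h - 1, ⟨by omega, by omega⟩, (D.erase i).image (iot i j), ?_, ?_, rfl⟩)
          · rw [Finset.card_image_of_injOn
              (image_iot_injOn hi hij (fun hc => hjD (Finset.mem_of_mem_erase hc))),
              Finset.card_erase_of_mem hiD, hDc]
          · intro u hu
            rw [Finset.mem_image] at hu
            obtain ⟨d, hd, rfl⟩ := hu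
            rw [Finset.mem_erase] at hd
            obtain ⟨hdi, hdD⟩ := hd
            have hbd := hb d hdD
            have hbi := hb i hiD
            rw [Finset.mem_Icc]
            unfold iot; split_ifs <;> omega
      · -- j in D, i not in D
        have hEe : (D.image (iot i j)).erase i = (D.erase j).image (iot i j) := by
          ext u
          simp only [Finset.mem_erase, Finset.mem_image]
          constructor
          · rintro ⟨hui, d, hd, rfl⟩
            refine ⟨d, ⟨?_, hd⟩, rfl⟩
            intro hdj; exact hui (by rw [hdj]; exact iot_j hij)
          · rintro ⟨d, ⟨hdj, hd⟩, rfl⟩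
            refine ⟨?_, d, hd, rfl⟩
            intro hcon
            rcases (iot_eq_i_iff hij).1 hcon with h' | h'
            · exact hiD (h' ▸ hd)
            · exact hdj h'
        have himg := image_sdiff_one hi hij hj (Or.inr ⟨hiD, hjD⟩)
        rw [himg, hEe]
        by_cases h1 : h = 1
        · have hDj : D = {j} := by
            obtain ⟨a, ha⟩ := Finset.card_eq_one.1 (h1 ▸ hDc)
            rw [ha] at hjD
            rw [Finset.mem_singleton] at hjD
            rw [ha, hjD]
          rw [hDj, Finset.erase_singleton, Finset.image_empty, Finset.sdiff_empty]
          exact Or.inr (Or.inr rfl)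
        · refine Or.inr (Or.inl ⟨h - 1, ⟨by omega, by omega⟩, (D.erase j).image (iot i j), ?_, ?_, rfl⟩)
          · rw [Finset.card_image_of_injOn (image_iot_injOn hi hij (Finset.notMem_erase _ _)),
              Finset.card_erase_of_mem hjD, hDc]
          · intro u hu
            rw [Finset.mem_image] at hu
            obtain ⟨d, hd, rfl⟩ := hu
            rw [Finset.mem_erase] at hd
            obtain ⟨hdj, hdD⟩ := hd
            have hbd := hb d hdD
            have hbj := hb j hjD
            rw [Finset.mem_Icc]
            unfold iot; split_ifs <;> omega
      · -- neither
        have himg := image_sdiff_iff hi hij hj (show i ∈ D ↔ j ∈ D by tauto)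
        rw [himg]
        have hcard : (D.image (iot i j)).card = h := by
          rw [Finset.card_image_of_injOn (image_iot_injOn hi hij hjD), hDc]
        by_cases hhr' : h ≤ r - 1
        · refine Or.inr (Or.inl ⟨h, ⟨hh1, hhr'⟩, D.image (iot i j), hcard, ?_, rfl⟩)
          intro u hu
          rw [Finset.mem_image] at hu
          obtain ⟨d, hd, rfl⟩ := hu
          have hbd := hb d hd
          have hdi : d ≠ i := fun hc => hiD (hc ▸ hd)
          have hdj : d ≠ j := fun hc => hjD (hc ▸ hd)
          rw [Finset.mem_Icc]
          unfold iot; split_ifs <;> omega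
        · -- h = r : image lands in the small part
          have hhr2 : h = r := by omega
          left
          have hEsub : D.image (iot i j) ⊆ vec (n - 1) := by
            intro u hu
            rw [Finset.mem_image] at hu
            obtain ⟨d, hd, rfl⟩ := hu
            have hbd := hb d hd
            simp only [vec, Finset.mem_Icc]
            unfold iot; split_ifs <;> omega
          have hcards : (vec (n - 1) \ D.image (iot i j)).card = n - 1 - h := by
            rw [Finset.card_sdiff_of_subset hEsub, hcard, vec, Nat.card_Icc]
            omega
          refine ⟨?_, Finset.sdiff_subset, ?_⟩
          · rw [Finset.mem_sdiff]
            constructor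
            · simp only [vec, Finset.mem_Icc]; omega
            · intro hc
              rw [Finset.mem_image] at hc
              obtain ⟨d, hd, hde⟩ := hc
              have hbd := hb d hd
              have hdi : d ≠ i := fun hcc => hiD (hcc ▸ hd)
              have hdj : d ≠ j := fun hcc => hjD (hcc ▸ hd)
              unfold iot at hde; split_ifs at hde <;> omega
          · rw [hcards]; omega
    · -- full
      rw [image_iot_vec hi hij hj]
      exact Or.inr (Or.inr rfl)
  · intro hT
    rcases hT with hT | ⟨h, ⟨hh1, hhr⟩, D', hD'c, hD'sub, rfl⟩ | rfl
    · -- small part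
      obtain ⟨h1T, hTv, hTc⟩ := hT
      refine ⟨T.image (sig j), ?_, image_sig_image_iot hij T⟩
      rw [mem_DPat]
      refine Or.inl ⟨one_mem_image_sig hij h1T (by omega),
        image_sig_subset_vec hij hj hTv (by omega), ?_⟩
      rw [harith1] at hTc
      exact le_trans Finset.card_image_le hTc
    · -- H part
      have harith2 : s - 1 - h + 1 = s - h := by omega
      rw [harith2] at hD'sub
      have hb : ∀ u ∈ D', s - h ≤ u ∧ u ≤ n - 1 := by
        intro u hu; have := hD'sub hu; rw [Finset.mem_Icc] at this; omega
      have hinotsig : ∀ X : Finset ℕ, i ∉ X → i ∉ X.image (sig j) := by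
        intro X hiX hc
        rw [Finset.mem_image] at hc
        obtain ⟨u, hu, he⟩ := hc
        exact hiX ((sig_eq_i_imp hij he) ▸ hu)
      have hjnotsig : ∀ X : Finset ℕ, j ∉ X.image (sig j) := by
        intro X hc
        rw [Finset.mem_image] at hc
        obtain ⟨u, _, he⟩ := hc
        exact (sig_ne_j u) he
      by_cases hiD' : i ∈ D'
      · -- merged block is a hole
        set E := insert i (insert j ((D'.erase i).image (sig j))) with hE
        have hiE : i ∈ E := Finset.mem_insert_self _ _
        have hjE : j ∈ E := Finset.mem_insert_of_mem (Finset.mem_insert_self _ _)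
        have hcE : E.card = h + 1 := by
          rw [hE, Finset.card_insert_of_notMem, Finset.card_insert_of_notMem
            (hjnotsig _), Finset.card_image_of_injective _ (sig_injective j),
            Finset.card_erase_of_mem hiD', hD'c]
          · omega
          · rw [Finset.mem_insert]
            push_neg
            exact ⟨by omega, hinotsig _ (Finset.notMem_erase _ _)⟩
        have hEimg : E.image (iot i j) = D' := by
          rw [hE, Finset.image_insert, Finset.image_insert, iot_i hij, iot_j hij,
            image_sig_image_iot hij, Finset.insert_idem, Finset.insert_erase hiD']
        refine ⟨vec n \ E, ?_, ?_⟩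
        · rw [mem_DPat]
          refine Or.inr (Or.inl ⟨h + 1, ⟨by omega, by omega⟩, E, hcE, ?_, rfl⟩)
          intro x hx
          rw [hE, Finset.mem_insert, Finset.mem_insert] at hx
          rw [Finset.mem_Icc]
          have hbi := hb i hiD'
          rcases hx with rfl | rfl | hx
          · omega
          · omega
          · rw [Finset.mem_image] at hx
            obtain ⟨u, hu, rfl⟩ := hx
            have := hb u (Finset.mem_of_mem_erase hu)
            unfold sig; split_ifs <;> omega
        · dsimp only
          rw [image_sdiff_iff hi hij hj (by tauto), hEimg]
      · by_cases hcrit : s - h ∈ D' ∧ s - h < j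
        · set E := insert j (D'.image (sig j)) with hE
          have hiE : i ∉ E := by
            rw [hE, Finset.mem_insert]
            push_neg
            exact ⟨by omega, hinotsig _ hiD'⟩
          have hjE : j ∈ E := Finset.mem_insert_self _ _
          have hcE : E.card = h + 1 := by
            rw [hE, Finset.card_insert_of_notMem (hjnotsig _),
              Finset.card_image_of_injective _ (sig_injective j), hD'c]
          have hEimg : (E.image (iot i j)).erase i = D' := by
            rw [hE, Finset.image_insert, iot_j hij, image_sig_image_iot hij,
              Finset.erase_insert hiD']
          refine ⟨vec n \ E, ?_, ?_⟩
          · rw [mem_DPat]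
            refine Or.inr (Or.inl ⟨h + 1, ⟨by omega, by omega⟩, E, hcE, ?_, rfl⟩)
            intro x hx
            rw [hE, Finset.mem_insert] at hx
            rw [Finset.mem_Icc]
            rcases hx with rfl | hx
            · omega
            · rw [Finset.mem_image] at hx
              obtain ⟨u, hu, rfl⟩ := hx
              have := hb u hu
              unfold sig; split_ifs <;> omega
          · dsimp only
            rw [image_sdiff_one hi hij hj (Or.inr ⟨hiE, hjE⟩), hEimg]
        · set E := D'.image (sig j) with hE
          have hiE : i ∉ E := hinotsig _ hiD'
          have hjE : j ∉ E := hjnotsig _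
          have hcE : E.card = h := by
            rw [hE, Finset.card_image_of_injective _ (sig_injective j), hD'c]
          have hEimg : E.image (iot i j) = D' := by
            rw [hE, image_sig_image_iot hij]
          refine ⟨vec n \ E, ?_, ?_⟩
          · rw [mem_DPat]
            refine Or.inr (Or.inl ⟨h, ⟨hh1, by omega⟩, E, hcE, ?_, rfl⟩)
            intro x hx
            rw [hE, Finset.mem_image] at hx
            obtain ⟨u, hu, rfl⟩ := hx
            have hbu := hb u hu
            rw [Finset.mem_Icc]
            by_cases hueq : u = s - h
            · have hnj : ¬ (s - h < j) := fun hc => hcrit ⟨hueq ▸ hu, hc⟩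
              unfold sig; split_ifs <;> omega
            · unfold sig; split_ifs <;> omega
          · dsimp only
            rw [image_sdiff_iff hi hij hj (by tauto), hEimg]
    · -- full
      refine ⟨vec n, ?_, image_iot_vec hi hij hj⟩
      rw [mem_DPat]
      exact Or.inr (Or.inr rfl)

end Stmt16Aux6
section Stmt16Aux7

open Finset

variable {d q n m l : ℕ}

lemma one_mem_vec (hn : 1 ≤ n) : 1 ∈ vec n := by simp [vec, Finset.mem_Icc]; omega

lemma A1Pat_mono (h : q ≤ d) : A1Pat q n ⊆ A1Pat d n := by
  rintro S ⟨h1, h2, h3⟩; exact ⟨h1, h2, le_trans h3 h⟩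

lemma singleton_one_mem_A1 (hq : 1 ≤ q) (hn : 1 ≤ n) : ({1} : Finset ℕ) ∈ A1Pat q n := by
  refine ⟨Finset.mem_singleton_self 1, ?_, by simp [hq]⟩
  intro x hx
  rw [Finset.mem_singleton] at hx
  rw [hx]; exact one_mem_vec hn

lemma isPattern_A1 (hq : 1 ≤ q) (hn : 1 ≤ n) : IsPattern n (A1Pat q n) := by
  refine ⟨⟨{1}, singleton_one_mem_A1 hq hn⟩, ?_⟩
  rintro Q ⟨h1, h2, _⟩
  exact ⟨⟨1, h1⟩, h2⟩

lemma cosingleton_mem_A1 (hd2 : 2 ≤ d) (hdn : d ≤ n) (hq : n - 1 ≤ q) :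
    vec n \ {d} ∈ A1Pat q n := by
  refine ⟨?_, Finset.sdiff_subset, ?_⟩
  · rw [Finset.mem_sdiff, Finset.mem_singleton]
    exact ⟨one_mem_vec (by omega), by omega⟩
  · have hsub : ({d} : Finset ℕ) ⊆ vec n := by
      intro x hx
      rw [Finset.mem_singleton] at hx
      rw [hx]
      simp only [vec, Finset.mem_Icc]
      omega
    rw [Finset.card_sdiff_of_subset hsub, vec, Nat.card_Icc, Finset.card_singleton]
    omega

lemma vec_mem_A1 (hn : 1 ≤ n) (hq : n ≤ q) : vec n ∈ A1Pat q n := by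
  refine ⟨one_mem_vec hn, Finset.Subset.refl _, ?_⟩
  rw [vec, Nat.card_Icc]; omega

lemma vec_card (n : ℕ) : (vec n).card = n := by rw [vec, Nat.card_Icc]; omega

-- ============ Family 1 : A1Pat m n ============
lemma fam1_HSP (hm : 3 ≤ m) :
    IsHSP (m + 1) (A1Pat m (m + 1)) ∧
      indPat (gammaIJ m (m + 1)) m (A1Pat m (m + 1)) = A1Pat m m := by
  have hPat : ∀ n, m + 1 ≤ n → IsPattern n (A1Pat m n) :=
    fun n hn => isPattern_A1 (by omega) (by omega)
  have hMerge : ∀ n i j, m + 1 < n → 1 ≤ i → i < j → j ≤ n →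
      mimg i j (A1Pat m n) = A1Pat m (n - 1) :=
    fun n i j hn hi hij hj => mimg_A1 hi hij hj (by omega)
  have hBase : ∀ k C, 2 ≤ k → k < m + 1 → IsNOP (m + 1) k C →
      indPat C k (A1Pat m (m + 1)) = A1Pat k k := by
    intro k C h2 hk hC
    refine base_proj h2 (by omega) (by omega) hC ?_ ?_ ?_
    · exact A1Pat_mono (by omega)
    · rintro S ⟨h1, h2', _⟩; exact ⟨h1, h2'⟩
    · exact Or.inr fun d hd2 hdn => cosingleton_mem_A1 hd2 hdn (by omega)
  constructor
  · exact master_HSP (m + 1) (by omega) (fun n => A1Pat m n) hPat hMerge hBase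
  · exact hBase m (gammaIJ m (m + 1)) (by omega) (by omega)
      (isNOP_gammaIJ (by omega) (by omega) (le_refl (m + 1)))

-- ============ Family 2 : A1Pat n n ============
lemma fam2_HSP (hm : 3 ≤ m) :
    IsHSP (m + 1) (A1Pat (m + 1) (m + 1)) ∧
      indPat (gammaIJ m (m + 1)) m (A1Pat (m + 1) (m + 1)) = A1Pat m m := by
  have hPat : ∀ n, m + 1 ≤ n → IsPattern n (A1Pat n n) :=
    fun n hn => isPattern_A1 (by omega) (by omega)
  have hMerge : ∀ n i j, m + 1 < n → 1 ≤ i → i < j → j ≤ n →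
      mimg i j (A1Pat n n) = A1Pat (n - 1) (n - 1) := by
    intro n i j hn hi hij hj
    rw [mimg_A1min hi hij hj, min_eq_right (by omega)]
  have hBase : ∀ k C, 2 ≤ k → k < m + 1 → IsNOP (m + 1) k C →
      indPat C k (A1Pat (m + 1) (m + 1)) = A1Pat k k := by
    intro k C h2 hk hC
    refine base_proj h2 (by omega) (by omega) hC ?_ ?_ ?_
    · exact A1Pat_mono (by omega)
    · rintro S ⟨h1, h2', _⟩; exact ⟨h1, h2'⟩
    · exact Or.inl (vec_mem_A1 (by omega) (le_refl _))
  constructor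
  · exact master_HSP (m + 1) (by omega) (fun n => A1Pat n n) hPat hMerge hBase
  · exact hBase m (gammaIJ m (m + 1)) (by omega) (by omega)
      (isNOP_gammaIJ (by omega) (by omega) (le_refl (m + 1)))

-- ============ Family 3 : A1Pat (m-1) n ∪ {vec n} ============
lemma fam3_HSP (hm : 3 ≤ m) :
    IsHSP (m + 1) (A1Pat (m - 1) (m + 1) ∪ {vec (m + 1)}) ∧
      indPat (gammaIJ m (m + 1)) m (A1Pat (m - 1) (m + 1) ∪ {vec (m + 1)}) = A1Pat m m := by
  have hPat : ∀ n, m + 1 ≤ n → IsPattern n (A1Pat (m - 1) n ∪ {vec n}) := by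
    intro n hn
    constructor
    · exact ⟨{1}, Or.inl (singleton_one_mem_A1 (by omega) (by omega))⟩
    · rintro Q (⟨h1, h2, _⟩ | hQ)
      · exact ⟨⟨1, h1⟩, h2⟩
      · rw [Set.mem_singleton_iff] at hQ
        rw [hQ]
        exact ⟨⟨1, one_mem_vec (by omega)⟩, Finset.Subset.refl _⟩
  have hMerge : ∀ n i j, m + 1 < n → 1 ≤ i → i < j → j ≤ n →
      mimg i j (A1Pat (m - 1) n ∪ {vec n}) = A1Pat (m - 1) (n - 1) ∪ {vec (n - 1)} := by
    intro n i j hn hi hij hj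
    rw [mimg_union, mimg_A1 hi hij hj (by omega), mimg_singleton_vec hi hij hj]
  have hBase : ∀ k C, 2 ≤ k → k < m + 1 → IsNOP (m + 1) k C →
      indPat C k (A1Pat (m - 1) (m + 1) ∪ {vec (m + 1)}) = A1Pat k k := by
    intro k C h2 hk hC
    refine base_proj h2 (by omega) (by omega) hC ?_ ?_ ?_
    · exact subset_trans (A1Pat_mono (by omega)) Set.subset_union_left
    · rintro S (⟨h1, h2', _⟩ | hS)
      · exact ⟨h1, h2'⟩
      · rw [Set.mem_singleton_iff] at hS
        rw [hS]
        exact ⟨one_mem_vec (by omega), Finset.Subset.refl _⟩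
    · exact Or.inl (Or.inr rfl)
  constructor
  · exact master_HSP (m + 1) (by omega) (fun n => A1Pat (m - 1) n ∪ {vec n}) hPat hMerge hBase
  · exact hBase m (gammaIJ m (m + 1)) (by omega) (by omega)
      (isNOP_gammaIJ (by omega) (by omega) (le_refl (m + 1)))

-- ============ Family 4 : DPat n (n-m) (l+n-m-1) ============
lemma fam4_eq_base (hm : 3 ≤ m) (hl : 3 ≤ l) :
    DPat (m + 1) (m + 1 - m) (l + (m + 1) - m - 1) = DPat (m + 1) 1 l := by
  have e1 : m + 1 - m = 1 := by omega
  have e2 : l + (m + 1) - m - 1 = l := by omega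
  rw [e1, e2]

lemma mem_DPat_small (N R So : ℕ) {T : Finset ℕ} (h : T ∈ A1Pat (N - R - 1) N) :
    T ∈ DPat N R So := Or.inl (Or.inl h)

lemma mem_DPat_full (N R So : ℕ) : vec N ∈ DPat N R So := Or.inr rfl

lemma fam4_HSP (hm : 3 ≤ m) (hl3 : 3 ≤ l) (hlm : l ≤ m + 1) :
    IsHSP (m + 1) (DPat (m + 1) 1 l) ∧
      indPat (gammaIJ m (m + 1)) m (DPat (m + 1) 1 l) = A1Pat m m := by
  set Fam : ℕ → Set (Finset ℕ) := fun n => DPat n (n - m) (l + n - m - 1) with hFam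
  have hFb : Fam (m + 1) = DPat (m + 1) 1 l := fam4_eq_base hm hl3
  have hPat : ∀ n, m + 1 ≤ n → IsPattern n (Fam n) := by
    intro n hn
    constructor
    · exact ⟨vec n, mem_DPat_full n _ _⟩
    · intro Q hQ
      rw [hFam, mem_DPat] at hQ
      rcases hQ with ⟨h1, h2, _⟩ | ⟨h, ⟨hh1, hhr⟩, D, hDc, hDsub, rfl⟩ | rfl
      · exact ⟨⟨1, h1⟩, h2⟩
      · refine ⟨⟨1, ?_⟩, Finset.sdiff_subset⟩
        rw [Finset.mem_sdiff]
        refine ⟨one_mem_vec (by omega), ?_⟩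
        intro hc
        have := hDsub hc
        rw [Finset.mem_Icc] at this
        omega
      · exact ⟨⟨1, one_mem_vec (by omega)⟩, Finset.Subset.refl _⟩
  have hMerge : ∀ n i j, m + 1 < n → 1 ≤ i → i < j → j ≤ n →
      mimg i j (Fam n) = Fam (n - 1) := by
    intro n i j hn hi hij hj
    rw [hFam]
    have := mimg_DPat hi hij hj (r := n - m) (s := l + n - m - 1)
      (by omega) (by omega) (by omega) (by omega)
    rw [this]
    have e1 : n - m - 1 = n - 1 - m := by omega
    have e2 : l + n - m - 1 - 1 = l + (n - 1) - m - 1 := by omega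
    rw [e1, e2]
  have hBase : ∀ k C, 2 ≤ k → k < m + 1 → IsNOP (m + 1) k C →
      indPat C k (Fam (m + 1)) = A1Pat k k := by
    intro k C h2 hk hC
    rw [hFb]
    refine base_proj h2 (by omega) (by omega) hC ?_ ?_ ?_
    · intro S hS
      refine mem_DPat_small (m + 1) 1 l ?_
      have e : m + 1 - 1 - 1 = m - 1 := by omega
      rw [e]
      exact A1Pat_mono (by omega) hS
    · intro S hS
      have hp := hPat (m + 1) le_rfl
      have := hp.2 S (by rw [hFb]; exact hS)
      refine ⟨?_, this.2⟩
      rw [← hFb, hFam, mem_DPat] at hS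
      rcases hS with ⟨h1, _, _⟩ | ⟨h, ⟨hh1, hhr⟩, D, hDc, hDsub, rfl⟩ | rfl
      · exact h1
      · rw [Finset.mem_sdiff]
        refine ⟨one_mem_vec (by omega), ?_⟩
        intro hc
        have := hDsub hc
        rw [Finset.mem_Icc] at this
        omega
      · exact one_mem_vec (by omega)
    · exact Or.inl (mem_DPat_full (m + 1) 1 l)
  constructor
  · rw [← hFb]
    exact master_HSP (m + 1) (by omega) Fam hPat hMerge hBase
  · rw [← hFb]
    exact hBase m (gammaIJ m (m + 1)) (by omega) (by omega)
      (isNOP_gammaIJ (by omega) (by omega) (le_refl (m + 1)))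

end Stmt16Aux7
section Stmt16Aux8

open Finset

variable {m n i j : ℕ}

lemma image_iot_cancel (hi : 1 ≤ i) (hij : i < j) {R S : Finset ℕ} (hiS : i ∉ S) (hjS : j ∉ S)
    (h : R.image (iot i j) = S.image (iot i j)) : R = S := by
  have hnotR : i ∉ R ∧ j ∉ R := by
    have h1 : i ∈ R.image (iot i j) ↔ i ∈ R ∨ j ∈ R := mem_image_iot_i hi hij
    have h2 : i ∈ S.image (iot i j) ↔ i ∈ S ∨ j ∈ S := mem_image_iot_i hi hij
    rw [h] at h1
    constructor <;> intro hc
    · have := h2.1 (h1.2 (Or.inl hc)); tauto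
    · have := h2.1 (h1.2 (Or.inr hc)); tauto
  ext x
  by_cases hxi : x = i
  · rw [hxi]; constructor <;> intro hc
    · exact absurd hc hnotR.1
    · exact absurd hc hiS
  · by_cases hxj : x = j
    · rw [hxj]; constructor <;> intro hc
      · exact absurd hc hnotR.2
      · exact absurd hc hjS
    · have hxiot : iot i j x ≠ i := by
        rw [Ne, iot_eq_i_iff hij]; tauto
      have e : sig j (iot i j x) = x := sig_iot hij hxi hxj
      constructor
      · intro hc
        have h1 : iot i j x ∈ R.image (iot i j) := Finset.mem_image_of_mem _ hc
        rw [h] at h1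
        have := (mem_image_iot_ne hi hij hxiot).1 h1
        rwa [e] at this
      · intro hc
        have h1 : iot i j x ∈ S.image (iot i j) := Finset.mem_image_of_mem _ hc
        rw [← h] at h1
        have := (mem_image_iot_ne hi hij hxiot).1 h1
        rwa [e] at this

lemma preimage_cosingleton (hi2 : 2 ≤ i) (hij : i < j) (hj : j ≤ n) {R : Finset ℕ}
    (hR : R ⊆ vec n) (him : R.image (iot i j) = vec (n - 1) \ {i}) :
    R = vec n \ {i, j} := by
  have hi : 1 ≤ i := by omega
  ext x
  rw [Finset.mem_sdiff]
  constructor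
  · intro hx
    refine ⟨hR hx, ?_⟩
    intro hc
    rw [Finset.mem_insert, Finset.mem_singleton] at hc
    have : i ∈ R.image (iot i j) := by
      rw [mem_image_iot_i hi hij]
      rcases hc with rfl | rfl
      · exact Or.inl hx
      · exact Or.inr hx
    rw [him, Finset.mem_sdiff, Finset.mem_singleton] at this
    exact this.2 rfl
  · rintro ⟨hxv, hxij⟩
    rw [Finset.mem_insert, Finset.mem_singleton] at hxij
    push_neg at hxij
    obtain ⟨hxi, hxj⟩ := hxij
    have hxiot : iot i j x ≠ i := by
      rw [Ne, iot_eq_i_iff hij]; tauto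
    have hxb : 1 ≤ x ∧ x ≤ n := by
      simpa [vec, Finset.mem_Icc] using hxv
    have hu : iot i j x ∈ vec (n - 1) \ {i} := by
      rw [Finset.mem_sdiff, Finset.mem_singleton]
      refine ⟨?_, hxiot⟩
      simp only [vec, Finset.mem_Icc]
      exact ⟨iot_pos hi hij hxb.1, iot_le hij hj hxb.2⟩
    rw [← him] at hu
    have := (mem_image_iot_ne hi hij hxiot).1 hu
    rwa [sig_iot hij hxi hxj] at this

lemma classify_mem (hm : 3 ≤ m) {T : Finset ℕ} (h1 : 1 ∈ T) (hv : T ⊆ vec (m + 1)) :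
    T.card ≤ m - 1 ∨ (∃ d, 2 ≤ d ∧ d ≤ m + 1 ∧ T = vec (m + 1) \ {d}) ∨ T = vec (m + 1) := by
  have hc : T.card ≤ m + 1 := by
    have := Finset.card_le_card hv; rwa [vec_card] at this
  by_cases hc1 : T.card ≤ m - 1
  · exact Or.inl hc1
  · by_cases hc2 : T.card = m + 1
    · refine Or.inr (Or.inr ?_)
      apply Finset.eq_of_subset_of_card_le hv
      rw [vec_card]; omega
    · have hcm : T.card = m := by omega
      refine Or.inr (Or.inl ?_)
      have hDc : (vec (m + 1) \ T).card = 1 := by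
        rw [Finset.card_sdiff_of_subset hv, vec_card]; omega
      obtain ⟨d, hd⟩ := Finset.card_eq_one.1 hDc
      have hdmem : d ∈ vec (m + 1) \ T := by
        rw [hd]; exact Finset.mem_singleton_self d
      rw [Finset.mem_sdiff] at hdmem
      have hdb : 1 ≤ d ∧ d ≤ m + 1 := by
        simpa [vec, Finset.mem_Icc] using hdmem.1
      have hd1 : d ≠ 1 := fun hcn => hdmem.2 (hcn ▸ h1)
      refine ⟨d, by omega, by omega, ?_⟩
      rw [← hd, Finset.sdiff_sdiff_self_left, Finset.inter_eq_right.2 hv]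

lemma tail_step (hm : 3 ≤ m) {Q P : Set (Finset ℕ)}
    (hQv : ∀ S ∈ Q, S ⊆ vec (m + 2))
    (hQmerge : ∀ i j, 1 ≤ i → i < j → j ≤ m + 2 → mimg i j Q = P)
    {d x : ℕ} (hd2 : 2 ≤ d) (hdx : d < x) (hx : x ≤ m + 1)
    (hHd : vec (m + 1) \ {d} ∈ P) : vec (m + 1) \ {x} ∈ P := by
  have e21 : m + 2 - 1 = m + 1 := rfl
  -- step 1: the double-hole set is in Q
  have h1 : mimg d x Q = P := hQmerge d x (by omega) hdx (by omega)
  have hmem : vec (m + 2) \ ({d, x} : Finset ℕ) ∈ Q := by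
    have hmem' : vec (m + 1) \ {d} ∈ mimg d x Q := by rw [h1]; exact hHd
    obtain ⟨R, hR, hRe⟩ := hmem'
    have hReq : R = vec (m + 2) \ ({d, x} : Finset ℕ) := by
      apply preimage_cosingleton hd2 hdx (by omega) (hQv R hR)
      rw [e21]
      exact hRe
    rw [← hReq]; exact hR
  -- step 2: project along (d, x+1)
  have h2 : mimg d (x + 1) Q = P := hQmerge d (x + 1) (by omega) (by omega) (by omega)
  have himg2 : (vec (m + 2) \ ({d, x} : Finset ℕ)).image (iot d (x + 1)) =
      vec (m + 1) \ {x} := by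
    have hone := image_sdiff_one (i := d) (j := x + 1) (n := m + 2) (by omega) (by omega)
      (by omega) (D := {d, x}) (Or.inl ⟨by simp, by simp; omega⟩)
    rw [hone]
    have hpair : ((({d, x} : Finset ℕ)).image (iot d (x + 1))).erase d = {x} := by
      rw [show ({d, x} : Finset ℕ) = insert d {x} from rfl, Finset.image_insert,
        Finset.image_singleton, iot_i (by omega : d < x + 1)]
      have ex : iot d (x + 1) x = x := by unfold iot; split_ifs <;> omega
      rw [ex, Finset.erase_insert (by simp; omega)]
    rw [hpair, e21]
  rw [← h2]
  exact ⟨_, hmem, himg2⟩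

lemma small_mem_aux (hm : 3 ≤ m) {P : Set (Finset ℕ)}
    (hmerge : ∀ i j, 1 ≤ i → i < j → j ≤ m + 1 → mimg i j P = A1Pat m m)
    {S : Finset ℕ} (h1S : 1 ∈ S) (hSv : S ⊆ vec (m + 1)) (hSc : S.card ≤ m - 1)
    {i j : ℕ} (hi : i ∈ vec (m + 1) \ S) (hj : j ∈ vec (m + 1) \ S) (hij : i < j) :
    S ∈ P := by
  rw [Finset.mem_sdiff] at hi hj
  have hib : 1 ≤ i ∧ i ≤ m + 1 := by simpa [vec, Finset.mem_Icc] using hi.1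
  have hjb : 1 ≤ j ∧ j ≤ m + 1 := by simpa [vec, Finset.mem_Icc] using hj.1
  have himg : S.image (iot i j) ∈ A1Pat m m := by
    refine ⟨one_mem_image_iot hib.1 hij h1S, ?_, ?_⟩
    · exact image_iot_subset_vec hib.1 hij hjb.2 hSv
    · exact le_trans Finset.card_image_le (by omega)
  rw [← hmerge i j hib.1 hij hjb.2] at himg
  obtain ⟨R, hR, hRe⟩ := himg
  have : R = S := image_iot_cancel hib.1 hij hi.2 hj.2 hRe
  exact this ▸ hR

lemma classification (hm : 3 ≤ m) {P : Set (Finset ℕ)} (hHSP : IsHSP (m + 1) P)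
    (hproj : indPat (gammaIJ m (m + 1)) m P = A1Pat m m) :
    P = A1Pat m (m + 1) ∨ P = A1Pat (m + 1) (m + 1) ∨
      P = A1Pat (m - 1) (m + 1) ∪ {vec (m + 1)} ∨
      ∃ l, 3 ≤ l ∧ l ≤ m + 1 ∧ P = DPat (m + 1) 1 l := by
  have hPmem : ∀ S ∈ P, S ⊆ vec (m + 1) := fun S hS => (hHSP.1.2 S hS).2
  -- all merges project to A1Pat m m
  have hmerge : ∀ i j, 1 ≤ i → i < j → j ≤ m + 1 → mimg i j P = A1Pat m m := by
    intro i j hi hij hj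
    rw [← indPat_gamma hi hij hj hPmem]
    have e : m + 1 - 1 = m := rfl
    rw [e]
    rw [hHSP.2.1 m (by omega) (by omega) (gammaIJ i j) (gammaIJ m (m + 1))
      (isNOP_gammaIJ hi hij hj) (isNOP_gammaIJ (by omega) (by omega) le_rfl)]
    exact hproj
  -- every member contains 1
  have hsub1 : ∀ S ∈ P, 1 ∈ S := by
    intro S hS
    have h23 : mimg 2 3 P = A1Pat m m := hmerge 2 3 (by omega) (by omega) (by omega)
    have hmem : S.image (iot 2 3) ∈ A1Pat m m := by
      rw [← h23]; exact ⟨S, hS, rfl⟩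
    obtain ⟨h1i, _, _⟩ := hmem
    have h1 := (mem_image_iot_ne (by omega : 1 ≤ 2) (by omega : 2 < 3)
      (by omega : (1 : ℕ) ≠ 2)).1 h1i
    have e : sig 3 1 = 1 := by unfold sig; split_ifs <;> omega
    rwa [e] at h1
  -- all small 1-sets are in P
  have hlow : A1Pat (m - 1) (m + 1) ⊆ P := by
    rintro S ⟨h1S, hSv, hSc⟩
    have hcc : 1 < (vec (m + 1) \ S).card := by
      rw [Finset.card_sdiff_of_subset hSv, vec_card]
      have := Finset.card_le_card hSv
      rw [vec_card] at this
      omega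
    obtain ⟨a, ha, b, hb, hab⟩ := Finset.one_lt_card.1 hcc
    rcases lt_or_gt_of_ne hab with hlt | hgt
    · exact small_mem_aux hm hmerge h1S hSv hSc ha hb hlt
    · exact small_mem_aux hm hmerge h1S hSv hSc hb ha hgt
  have hclass : ∀ S ∈ P, S.card ≤ m - 1 ∨
      (∃ d, 2 ≤ d ∧ d ≤ m + 1 ∧ S = vec (m + 1) \ {d}) ∨ S = vec (m + 1) :=
    fun S hS => classify_mem hm (hsub1 S hS) (hPmem S hS)
  by_cases hfull : vec (m + 1) ∈ P
  · -- the hereditary lift at level m+2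
    obtain ⟨Q, hQpat, _hQstab, hQproj⟩ := hHSP.2.2 (m + 2) (by omega)
    have hQv : ∀ S ∈ Q, S ⊆ vec (m + 2) := fun S hS => (hQpat.2 S hS).2
    have hQmerge : ∀ i j, 1 ≤ i → i < j → j ≤ m + 2 → mimg i j Q = P := by
      intro i j hi hij hj
      rw [← indPat_gamma hi hij hj hQv]
      have e : m + 2 - 1 = m + 1 := rfl
      rw [e]
      exact hQproj (gammaIJ i j) (isNOP_gammaIJ hi hij hj)
    have htail : ∀ d x, 2 ≤ d → vec (m + 1) \ {d} ∈ P → d < x → x ≤ m + 1 →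
        vec (m + 1) \ {x} ∈ P := by
      intro d x hd2 hHd hdx hx
      exact tail_step hm hQv hQmerge hd2 hdx hx hHd
    by_cases h2H : vec (m + 1) \ {2} ∈ P
    · -- P = A1Pat (m+1) (m+1)
      refine Or.inr (Or.inl ?_)
      apply Set.Subset.antisymm
      · intro S hS
        refine ⟨hsub1 S hS, hPmem S hS, ?_⟩
        have := Finset.card_le_card (hPmem S hS)
        rwa [vec_card] at this
      · rintro T ⟨h1T, hTv, _⟩
        rcases classify_mem hm h1T hTv with hsm | ⟨d, hd2, hdm, rfl⟩ | rfl
        · exact hlow ⟨h1T, hTv, hsm⟩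
        · rcases eq_or_lt_of_le hd2 with heq | hlt
          · rw [← heq]; exact h2H
          · exact htail 2 d (by omega) h2H hlt hdm
        · exact hfull
    · by_cases hHne : ∃ d, 2 ≤ d ∧ d ≤ m + 1 ∧ vec (m + 1) \ {d} ∈ P
      · -- P = DPat (m+1) 1 l
        set Hs : Set ℕ := {d | 2 ≤ d ∧ d ≤ m + 1 ∧ vec (m + 1) \ {d} ∈ P} with hHs
        have hne : Hs.Nonempty := hHne
        set l := sInf Hs with hldef
        have hlmem : l ∈ Hs := Nat.sInf_mem hne
        obtain ⟨hl2, hlm, hlP⟩ := hlmem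
        have hl3 : 3 ≤ l := by
          rcases Nat.lt_or_ge l 3 with hc | hc
          · exfalso
            have : l = 2 := by omega
            rw [this] at hlP
            exact h2H hlP
          · exact hc
        refine Or.inr (Or.inr (Or.inr ⟨l, hl3, hlm, ?_⟩))
        apply Set.Subset.antisymm
        · intro S hS
          rw [mem_DPat]
          rcases hclass S hS with hsm | ⟨d, hd2, hdm, rfl⟩ | rfl
          · refine Or.inl ⟨hsub1 S hS, hPmem S hS, ?_⟩
            have e : m + 1 - 1 - 1 = m - 1 := by omega
            rw [e]; exact hsm
          · have hdH : d ∈ Hs := ⟨hd2, hdm, hS⟩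
            have hld : l ≤ d := Nat.sInf_le hdH
            refine Or.inr (Or.inl ⟨1, ⟨le_rfl, le_rfl⟩, {d}, Finset.card_singleton d, ?_, rfl⟩)
            intro y hy
            rw [Finset.mem_singleton] at hy
            rw [hy, Finset.mem_Icc]
            omega
          · exact Or.inr (Or.inr rfl)
        · intro T hT
          rw [mem_DPat] at hT
          rcases hT with hsm | ⟨h, ⟨hh1, hhr⟩, D, hDc, hDsub, rfl⟩ | rfl
          · apply hlow
            have e : m + 1 - 1 - 1 = m - 1 := by omega
            rw [e] at hsm
            exact hsm
          · have hh : h = 1 := by omega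
            rw [hh] at hDc hDsub
            obtain ⟨d, rfl⟩ := Finset.card_eq_one.1 hDc
            have hdIcc : d ∈ Finset.Icc (l - 1 + 1) (m + 1) :=
              hDsub (Finset.mem_singleton_self d)
            rw [Finset.mem_Icc] at hdIcc
            have hld : l ≤ d := by omega
            rcases eq_or_lt_of_le hld with rfl | hlt
            · exact hlP
            · exact htail l d (by omega) hlP hlt (by omega)
          · exact hfull
      · -- P = A1Pat (m-1) (m+1) ∪ {vec (m+1)}
        push_neg at hHne
        refine Or.inr (Or.inr (Or.inl ?_))
        apply Set.Subset.antisymm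
        · intro S hS
          rcases hclass S hS with hsm | ⟨d, hd2, hdm, heq⟩ | rfl
          · exact Or.inl ⟨hsub1 S hS, hPmem S hS, hsm⟩
          · exact absurd (heq ▸ hS) (hHne d hd2 hdm)
          · exact Or.inr rfl
        · rintro T (hT | hT)
          · exact hlow hT
          · rw [Set.mem_singleton_iff] at hT
            rw [hT]; exact hfull
  · -- P = A1Pat m (m+1)
    refine Or.inl ?_
    have hcos : ∀ d, 2 ≤ d → d ≤ m + 1 → vec (m + 1) \ {d} ∈ P := by
      intro d hd2 hdm
      have h1d : mimg 1 d P = A1Pat m m := hmerge 1 d (by omega) (by omega) hdm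
      have hvm : vec m ∈ mimg 1 d P := by
        rw [h1d]; exact vec_mem_A1 (by omega) le_rfl
      obtain ⟨R, hR, hRe⟩ := hvm
      rcases hclass R hR with hsm | ⟨e, he2, hem, rfl⟩ | rfl
      · exfalso
        have hcard : (R.image (iot 1 d)).card = m := by
          have : (fun S => S.image (iot 1 d)) R = R.image (iot 1 d) := rfl
          rw [this] at hRe
          rw [hRe, vec_card]
        have := Finset.card_image_le (f := iot 1 d) (s := R)
        omega
      · have hed : e = d := by
          by_contra hne
          have he1 : e ≠ 1 := by omega
          have hu : iot 1 d e ≠ 1 := by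
            rw [Ne, iot_eq_i_iff (by omega : 1 < d)]
            push_neg
            exact ⟨he1, hne⟩
          have huvm : iot 1 d e ∈ vec m := by
            simp only [vec, Finset.mem_Icc]
            have h1 := iot_pos (i := 1) (j := d) (by omega) (by omega : 1 < d)
              (x := e) (by omega)
            have h2 := iot_le (i := 1) (j := d) (by omega : 1 < d) hdm (x := e) (by omega)
            omega
          have : iot 1 d e ∈ (vec (m + 1) \ {e}).image (iot 1 d) := by
            have e1 : (fun S => S.image (iot 1 d)) (vec (m + 1) \ {e}) =
                (vec (m + 1) \ {e}).image (iot 1 d) := rfl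
            rw [← e1, hRe]
            exact huvm
          have hmem := (mem_image_iot_ne (by omega : 1 ≤ 1) (by omega : 1 < d) hu).1 this
          rw [sig_iot (by omega : 1 < d) he1 hne] at hmem
          rw [Finset.mem_sdiff, Finset.mem_singleton] at hmem
          exact hmem.2 rfl
        rw [hed] at hR
        exact hR
      · exact absurd hR hfull
    apply Set.Subset.antisymm
    · intro S hS
      refine ⟨hsub1 S hS, hPmem S hS, ?_⟩
      rcases hclass S hS with hsm | ⟨d, _, _, heq⟩ | rfl
      · omega
      · rw [heq]
        have hsub : ({d} : Finset ℕ) ⊆ vec (m + 1) := by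
          rw [heq] at hS
          intro y hy
          rw [Finset.mem_singleton] at hy
          rw [hy]
          by_contra hc
          have hde : vec (m + 1) \ {d} = vec (m + 1) := by
            rw [Finset.sdiff_eq_self_iff_disjoint, Finset.disjoint_singleton_right]
            exact hc
          rw [hde] at hS
          exact hfull hS
        rw [Finset.card_sdiff_of_subset hsub, vec_card, Finset.card_singleton]
        omega
      · exact absurd hS hfull
    · rintro T ⟨h1T, hTv, hTc⟩
      rcases classify_mem hm h1T hTv with hsm | ⟨d, hd2, hdm, rfl⟩ | rfl
      · exact hlow ⟨h1T, hTv, hsm⟩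
      · exact hcos d hd2 hdm
      · rw [vec_card] at hTc
        omega

end Stmt16Aux8
theorem stmt16 (m : ℕ) (hm : 3 ≤ m) :
    {P : Set (Finset ℕ) | IsHSP (m + 1) P ∧ indPat (gammaIJ m (m + 1)) m P = A1Pat m m} =
      ({A1Pat m (m + 1), A1Pat (m + 1) (m + 1),
        A1Pat (m - 1) (m + 1) ∪ {vec (m + 1)}} : Set (Set (Finset ℕ))) ∪
      {P : Set (Finset ℕ) | ∃ l, 3 ≤ l ∧ l ≤ m + 1 ∧ P = DPat (m + 1) 1 l} := by
  ext P
  simp only [Set.mem_setOf_eq, Set.mem_union, Set.mem_insert_iff, Set.mem_singleton_iff]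
  constructor
  · rintro ⟨hHSP, hproj⟩
    rcases classification hm hHSP hproj with h | h | h | h
    · exact Or.inl (Or.inl h)
    · exact Or.inl (Or.inr (Or.inl h))
    · exact Or.inl (Or.inr (Or.inr h))
    · exact Or.inr h
  · rintro ((rfl | rfl | rfl) | ⟨l, hl3, hlm, rfl⟩)
    · exact fam1_HSP hm
    · exact fam2_HSP hm
    · exact fam3_HSP hm
    · exact fam4_HSP hm hl3 hlm
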